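/- Let G be a finite graph with no twins and no universal vertices. Then G is a circular-arc graph if and only if G admits a normalized circular-arc model. -/

import Mathlib

namespace CAIso

/-- The circle on which all models live. -/
abbrev Circle1 : Type := UnitAddCircle

variable {V : Type*}

/-- Closed neighborhood of a vertex. -/
def cnbr (G : SimpleGraph V) (v : V) : Set V := insert v {u | G.Adj v u}

/-- `G` has no twins: distinct vertices have distinct closed neighborhoods. -/
def NoTwins (G : SimpleGraph V) : Prop := ∀ u v : V, u ≠ v → cnbr G u ≠ cnbr G v

/-- `G` has no universal vertices. -/
def NoUniversal (G : SimpleGraph V) : Prop := ∀ v : V, cnbr G v ≠ Set.univ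

/-- `v di u` : non-adjacent (distinct) vertices. -/
def Di (G : SimpleGraph V) (v u : V) : Prop := v ≠ u ∧ ¬ G.Adj v u
/-- `v cs u` : `N[u] ⊊ N[v]`. -/
def Cs (G : SimpleGraph V) (v u : V) : Prop := v ≠ u ∧ cnbr G u ⊂ cnbr G v
/-- `v cd u` : `N[v] ⊊ N[u]`. -/
def Cd (G : SimpleGraph V) (v u : V) : Prop := v ≠ u ∧ cnbr G v ⊂ cnbr G u
/-- `v cc u`. -/
def Cc (G : SimpleGraph V) (v u : V) : Prop :=
  v ≠ u ∧ G.Adj v u ∧ cnbr G v ∪ cnbr G u = Set.univ ∧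
  (∀ w ∈ cnbr G v \ cnbr G u, cnbr G w ⊂ cnbr G v) ∧
  (∀ w ∈ cnbr G u \ cnbr G v, cnbr G w ⊂ cnbr G u)
/-- `v ov u` : the overlap relation `∼` of the overlap graph `G_ov`. -/
def Ov (G : SimpleGraph V) (v u : V) : Prop :=
  v ≠ u ∧ ¬ Di G v u ∧ ¬ Cs G v u ∧ ¬ Cd G v u ∧ ¬ Cc G v u
/-- `v ∥ u` : distinct and not `∼`-adjacent (complement of the overlap graph). -/
def ParR (G : SimpleGraph V) (v u : V) : Prop := v ≠ u ∧ ¬ Ov G v u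

/-- `left(v)`. -/
def leftSet (G : SimpleGraph V) (v : V) : Set V := {u | Cs G v u ∨ Cc G v u}
/-- `right(v)`. -/
def rightSet (G : SimpleGraph V) (v : V) : Set V := {u | Di G v u ∨ Cd G v u}

/-- The labeled endpoint map of a model: `(v, false)` is the first endpoint
(tail of a chord / initial endpoint of an arc, the letter `v⁰`), `(v, true)` the second
(the letter `v¹`). -/
def lep (φ : V → Circle1 × Circle1) (p : V × Bool) : Circle1 :=
  if p.2 then (φ p.1).2 else (φ p.1).1

/-- All endpoints of the objects assigned to vertices of `M` are pairwise distinct. -/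
def DistinctEndpointsOn (M : Set V) (φ : V → Circle1 × Circle1) : Prop :=
  Set.InjOn (lep φ) {p : V × Bool | p.1 ∈ M}

/-- The closed arc running in the positive direction from `c.1` to `c.2`. -/
def arcPts (c : Circle1 × Circle1) : Set Circle1 := {x | btw c.1 x c.2}
/-- The closed arc from `a` to `b` (positive direction). -/
def arcSet (a b : Circle1) : Set Circle1 := {x | btw a x b}
/-- The open arc from `a` to `b` (positive direction). -/
def oarcSet (a b : Circle1) : Set Circle1 := {x | sbtw a x b}

/-- A circular-arc model of `G`. -/
def IsCAModel (G : SimpleGraph V) (ψ : V → Circle1 × Circle1) : Prop :=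
  DistinctEndpointsOn Set.univ ψ ∧
  ∀ u v : V, u ≠ v → (G.Adj u v ↔ (arcPts (ψ u) ∩ arcPts (ψ v)).Nonempty)

/-- `G` is a circular-arc graph. -/
def IsCircularArc (G : SimpleGraph V) : Prop := ∃ ψ, IsCAModel G ψ

/-- Two arcs overlap: they intersect, neither contains the other,
and their union is not the whole circle. -/
def ArcsOverlap (c d : Circle1 × Circle1) : Prop :=
  (arcPts c ∩ arcPts d).Nonempty ∧ ¬ arcPts c ⊆ arcPts d ∧ ¬ arcPts d ⊆ arcPts c ∧
  arcPts c ∪ arcPts d ≠ Set.univ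

/-- A normalized circular-arc model of `G`. -/
def IsNormalizedModel (G : SimpleGraph V) (ψ : V → Circle1 × Circle1) : Prop :=
  IsCAModel G ψ ∧ ∀ u v : V, u ≠ v →
    ((Di G v u ↔ arcPts (ψ v) ∩ arcPts (ψ u) = ∅) ∧
     (Cs G v u ↔ arcPts (ψ u) ⊂ arcPts (ψ v)) ∧
     (Cd G v u ↔ arcPts (ψ v) ⊂ arcPts (ψ u)) ∧
     (Cc G v u ↔ arcPts (ψ v) ∪ arcPts (ψ u) = Set.univ) ∧
     (Ov G v u ↔ ArcsOverlap (ψ v) (ψ u)))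

/-- Two chords cross: each open arc determined by `c` contains exactly one endpoint of `d`. -/
def Crosses (c d : Circle1 × Circle1) : Prop :=
  (sbtw c.1 d.1 c.2 ∧ sbtw c.2 d.2 c.1) ∨ (sbtw c.1 d.2 c.2 ∧ sbtw c.2 d.1 c.1)

/-- A chord model of the relation `r` on the vertex set `M`. -/
def IsChordModelOn (r : V → V → Prop) (M : Set V) (φ : V → Circle1 × Circle1) : Prop :=
  DistinctEndpointsOn M φ ∧ ∀ u ∈ M, ∀ v ∈ M, u ≠ v → (r u v ↔ Crosses (φ u) (φ v))

/-- Chord `d` lies on the left side of the oriented chord `c = (tail, head)`: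
both endpoints of `d` lie in the open arc from the tail of `c` to the head of `c`. -/
def OnLeft (c d : Circle1 × Circle1) : Prop := sbtw c.1 d.1 c.2 ∧ sbtw c.1 d.2 c.2
/-- Chord `d` lies on the right side of the oriented chord `c`. -/
def OnRight (c d : Circle1 × Circle1) : Prop := sbtw c.2 d.1 c.1 ∧ sbtw c.2 d.2 c.1

/-- A conformal (oriented chord) model of `(M, ∼)`, where `∼` is the overlap relation of `G`. -/
def IsConformalOn (G : SimpleGraph V) (M : Set V) (φ : V → Circle1 × Circle1) : Prop :=
  IsChordModelOn (Ov G) M φ ∧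
  ∀ v ∈ M, ∀ u ∈ M, u ≠ v →
    ((u ∈ leftSet G v ↔ OnLeft (φ v) (φ u)) ∧ (u ∈ rightSet G v ↔ OnRight (φ v) (φ u)))

/-- `x ∼ M` : `x` is `∼`-adjacent to every vertex of `M`. -/
def SimAll (G : SimpleGraph V) (x : V) (M : Set V) : Prop := ∀ m ∈ M, Ov G x m
/-- `x ∥ M`. -/
def ParAll (G : SimpleGraph V) (x : V) (M : Set V) : Prop := ∀ m ∈ M, ParR G x m

/-- A module of the overlap graph `G_ov`. -/
def IsModule (G : SimpleGraph V) (M : Set V) : Prop :=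
  M.Nonempty ∧ ∀ x ∉ M, SimAll G x M ∨ ParAll G x M

/-- A strong module of `G_ov`. -/
def IsStrongModule (G : SimpleGraph V) (M : Set V) : Prop :=
  IsModule G M ∧ ∀ N, IsModule G N → N ⊆ M ∨ M ⊆ N ∨ Disjoint M N

/-- A proper module: some outside vertex is `∼`-adjacent to all of `M`. -/
def ProperModule (G : SimpleGraph V) (M : Set V) : Prop := ∃ x ∉ M, SimAll G x M

/-- `N` is a child of `M` in the modular decomposition:
a maximal strong module properly contained in `M`. -/
def IsChildOf (G : SimpleGraph V) (M N : Set V) : Prop :=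
  IsStrongModule G N ∧ N ⊂ M ∧ ∀ N', IsStrongModule G N' → N' ⊂ M → N ⊆ N' → N' = N

def NonSingleton (M : Set V) : Prop := ∃ x ∈ M, ∃ y ∈ M, x ≠ y

def ChildrenPairwiseSim (G : SimpleGraph V) (M : Set V) : Prop :=
  ∀ N₁ N₂, IsChildOf G M N₁ → IsChildOf G M N₂ → N₁ ≠ N₂ → ∀ x ∈ N₁, ∀ y ∈ N₂, Ov G x y
def ChildrenPairwisePar (G : SimpleGraph V) (M : Set V) : Prop :=
  ∀ N₁ N₂, IsChildOf G M N₁ → IsChildOf G M N₂ → N₁ ≠ N₂ → ∀ x ∈ N₁, ∀ y ∈ N₂, ParR G x y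

/-- A serial strong module of the modular decomposition of `G_ov`. -/
def SerialM (G : SimpleGraph V) (M : Set V) : Prop :=
  IsStrongModule G M ∧ NonSingleton M ∧ ChildrenPairwiseSim G M
/-- A parallel strong module. -/
def ParallelM (G : SimpleGraph V) (M : Set V) : Prop :=
  IsStrongModule G M ∧ NonSingleton M ∧ ChildrenPairwisePar G M
/-- A prime strong module (neither serial nor parallel). -/
def PrimeM (G : SimpleGraph V) (M : Set V) : Prop :=
  IsStrongModule G M ∧ NonSingleton M ∧ ¬ ChildrenPairwiseSim G M ∧ ¬ ChildrenPairwisePar G M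

/-- The graph induced by the (symmetrized) relation `r` on the set `M` is connected. -/
def ConnOn (r : V → V → Prop) (M : Set V) : Prop :=
  M.Nonempty ∧ ∀ ⦃x⦄, x ∈ M → ∀ ⦃y⦄, y ∈ M →
    Relation.ReflTransGen (fun a b => a ∈ M ∧ b ∈ M ∧ (r a b ∨ r b a)) x y

/-- `N[M]`, the set of outside vertices `∼`-adjacent to all of `M`. -/
def nbrMod (G : SimpleGraph V) (M : Set V) : Set V := {x | x ∉ M ∧ SimAll G x M}

/-- `C[M]`, the vertex set of the connected component of `G_ov` containing `M`. -/
def compOf (G : SimpleGraph V) (M : Set V) : Set V :=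
  {x | ∃ m ∈ M, Relation.ReflTransGen (fun a b => Ov G a b ∨ Ov G b a) x m}

/-- The set of endpoints of the chords/arcs of the vertices in `A`. -/
def eptSet (φ : V → Circle1 × Circle1) (A : Set V) : Set Circle1 :=
  {x | ∃ p : V × Bool, p.1 ∈ A ∧ lep φ p = x}

/-- The set of circle points realizing a set of labeled letters. -/
def lepIm (φ : V → Circle1 × Circle1) (P : Set (V × Bool)) : Set Circle1 :=
  {x | ∃ p ∈ P, lep φ p = x}

/-- `X` is contiguous in `Y`: `X = Y ∩ A` for a circular arc `A`. -/
def ContiguousIn (X Y : Set Circle1) : Prop := ∃ a b : Circle1, a ≠ b ∧ X = Y ∩ arcSet a b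

/-- `X` forms two contiguous blocks in `Y`. -/
def TwoBlocks (Y X : Set Circle1) : Prop :=
  ∃ X₁ X₂ : Set Circle1, X₁.Nonempty ∧ X₂.Nonempty ∧ Disjoint X₁ X₂ ∧ X₁ ∪ X₂ = X ∧
    ContiguousIn X₁ Y ∧ ContiguousIn X₂ Y

/-- The endpoints of `M` form two contiguous blocks, given by the arcs `(a,b)` and `(a',b')`,
within the endpoints of `Y`, each block containing exactly one endpoint of each chord of `M`. -/
def BlockDecomp (φ : V → Circle1 × Circle1) (Y M : Set V) (a b a' b' : Circle1) : Prop :=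
  a ≠ b ∧ a' ≠ b' ∧
  a ∉ eptSet φ Y ∧ b ∉ eptSet φ Y ∧ a' ∉ eptSet φ Y ∧ b' ∉ eptSet φ Y ∧
  Disjoint (eptSet φ Y ∩ arcSet a b) (eptSet φ Y ∩ arcSet a' b') ∧
  (eptSet φ Y ∩ arcSet a b) ∪ (eptSet φ Y ∩ arcSet a' b') = eptSet φ M ∧
  ∀ v ∈ M, (lep φ (v, false) ∈ arcSet a b ∧ lep φ (v, true) ∈ arcSet a' b') ∨
           (lep φ (v, false) ∈ arcSet a' b' ∧ lep φ (v, true) ∈ arcSet a b)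

/-- Reading order along the arc `(a,b)`: some endpoint of `u` inside the arc
precedes some endpoint of `w` inside the arc. -/
def rdOrd (φ : V → Circle1 × Circle1) (a b : Circle1) (u w : V) : Prop :=
  ∃ p q : Bool, lep φ (u, p) ∈ arcSet a b ∧ lep φ (w, q) ∈ arcSet a b ∧
    lep φ (u, p) ≠ lep φ (w, q) ∧ btw a (lep φ (u, p)) (lep φ (w, q))

/-- The letter of `u` belonging to `P` precedes the letter of `w` belonging to `P`,
reading from the point `a` in the positive direction. -/
def precInSet (φ : V → Circle1 × Circle1) (P : Set (V × Bool)) (a : Circle1) (u w : V) : Prop :=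
  ∃ p q : Bool, (u, p) ∈ P ∧ (w, q) ∈ P ∧ lep φ (u, p) ≠ lep φ (w, q) ∧
    btw a (lep φ (u, p)) (lep φ (w, q))

/-- `r` is a strict linear order on the set `M`. -/
def IsLinOrderOn (M : Set V) (r : V → V → Prop) : Prop :=
  (∀ x ∈ M, ¬ r x x) ∧
  (∀ x ∈ M, ∀ y ∈ M, ∀ z ∈ M, r x y → r y z → r x z) ∧
  (∀ x ∈ M, ∀ y ∈ M, x ≠ y → (r x y ↔ ¬ r y x))

/-- `(r₁, r₂)` is a permutation model of the graph `(M, adj)`. -/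
def IsPermModelOn (adj : V → V → Prop) (M : Set V) (r₁ r₂ : V → V → Prop) : Prop :=
  IsLinOrderOn M r₁ ∧ IsLinOrderOn M r₂ ∧
  ∀ x ∈ M, ∀ y ∈ M, x ≠ y → (adj x y ↔ (r₁ x y ↔ r₂ x y))

/-- `r` is an orientation of the edges `E` restricted to `M`. -/
def IsOrientationOn (E : V → V → Prop) (M : Set V) (r : V → V → Prop) : Prop :=
  (∀ x y, r x y → x ∈ M ∧ y ∈ M ∧ E x y) ∧
  (∀ x ∈ M, ∀ y ∈ M, E x y → (r x y ↔ ¬ r y x))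

/-- `r` is a transitive orientation of the edges `E` restricted to `M`. -/
def IsTransOrientOn (E : V → V → Prop) (M : Set V) (r : V → V → Prop) : Prop :=
  IsOrientationOn E M r ∧ ∀ x y z, r x y → r y z → r x z

/-- The cyclic betweenness of three labeled endpoints of a model. -/
def sb3 (φ : V → Circle1 × Circle1) (p q r : V × Bool) : Prop :=
  sbtw (lep φ p) (lep φ q) (lep φ r)

/-- Equivalence of oriented chord models restricted to `M` (equal circular words
over the labeled letters). -/
def OEquivOn (M : Set V) (φ ψ : V → Circle1 × Circle1) : Prop :=
  ∀ p q r : V × Bool, p.1 ∈ M → q.1 ∈ M → r.1 ∈ M → (sb3 φ p q r ↔ sb3 ψ p q r)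

def flipB : V × Bool → V × Bool := fun p => (p.1, !p.2)

/-- `ψ` is (equivalent to) the reflection of `φ` on `M`: the circular word of `ψ`
is the reverse of that of `φ` with `v⁰` and `v¹` exchanged. -/
def OReflOn (M : Set V) (φ ψ : V → Circle1 × Circle1) : Prop :=
  ∀ p q r : V × Bool, p.1 ∈ M → q.1 ∈ M → r.1 ∈ M →
    (sb3 φ p q r ↔ sb3 ψ (flipB r) (flipB q) (flipB p))

def swapBy (h : V → Bool) : V × Bool → V × Bool := fun p => (p.1, xor p.2 (h p.1))

/-- Equivalence of (non-oriented) chord models: equal circular word representations. -/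
def UEquiv (φ ψ : V → Circle1 × Circle1) : Prop :=
  ∃ h : V → Bool, ∀ p q r : V × Bool,
    sb3 φ p q r ↔ sb3 ψ (swapBy h p) (swapBy h q) (swapBy h r)

/-- `ψ` is equivalent to the reflection of the (non-oriented) chord model `φ`. -/
def UReflEquiv (φ ψ : V → Circle1 × Circle1) : Prop :=
  ∃ h : V → Bool, ∀ p q r : V × Bool,
    sb3 φ p q r ↔ sb3 ψ (swapBy h r) (swapBy h q) (swapBy h p)

/-- The sets `S 0, …, S (n-1)` appear in this circular order around the circle:
there are cut points, in cyclic order, such that `S i` lies in the `i`-th gap. -/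
def SetsInCyclicOrder (n : ℕ) (S : ℕ → Set Circle1) : Prop :=
  ∃ r : ℕ → ℝ,
    (∀ i j, i < j → j < n → r i < r j) ∧
    (∀ i, i < n → ∀ j, j < n → r i < r j + 1) ∧
    ∀ i, i < n → ∀ x ∈ S i, sbtw ((r i : ℝ) : Circle1) x ((r ((i + 1) % n) : ℝ) : Circle1)

/-- A split `(A, α(A), B, α(B))` of the graph `G`. -/
def IsSplit (G : SimpleGraph V) (A aA B aB : Set V) : Prop :=
  A.Nonempty ∧ B.Nonempty ∧
  Disjoint A aA ∧ Disjoint A B ∧ Disjoint A aB ∧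
  Disjoint aA B ∧ Disjoint aA aB ∧ Disjoint B aB ∧
  A ∪ aA ∪ B ∪ aB = Set.univ ∧
  (∀ a ∈ A, ∀ b ∈ B, G.Adj a b) ∧
  (∀ x ∈ aA, ∀ y ∈ B ∪ aB, ¬ G.Adj x y) ∧
  (∀ x ∈ aB, ∀ y ∈ A ∪ aA, ¬ G.Adj x y)

/-- A non-trivial split. -/
def NontrivialSplit (G : SimpleGraph V) (A aA B aB : Set V) : Prop :=
  IsSplit G A aA B aB ∧ 1 < (A ∪ aA).ncard ∧ 1 < (B ∪ aB).ncard

/-- The metaedge `(M⁰, M¹, <_M)` of the module `M` with representant `rep`: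
`M⁰, M¹` partition the labeled letters of `M` (one letter of each vertex on each side,
with `rep⁰ ∈ M⁰`), `<_M` is a transitive orientation of `(M, ∥)`, and in every conformal
model of `G_ov`, for every decomposition of the letters of `M` into two contiguous blocks
among the letters of `C[M]` whose first block contains `rep⁰`, the first block consists
exactly of the letters `M⁰`, the second of `M¹`, and the reading order of the first block
restricted to `∥`-pairs is exactly `<_M`. -/
def IsMetaedge (G : SimpleGraph V) (M : Set V) (rep : V)
    (M0 M1 : Set (V × Bool)) (lt : V → V → Prop) : Prop :=
  M0 ∪ M1 = {p : V × Bool | p.1 ∈ M} ∧ Disjoint M0 M1 ∧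
  (∀ v ∈ M, ((v, false) ∈ M0 ↔ (v, true) ∈ M1)) ∧
  (rep, false) ∈ M0 ∧
  IsTransOrientOn (ParR G) M lt ∧
  ∀ φ : V → Circle1 × Circle1, IsConformalOn G Set.univ φ →
    ∀ a b a' b' : Circle1, BlockDecomp φ (compOf G M) M a b a' b' →
      lep φ (rep, false) ∈ arcSet a b →
      ((∀ p : V × Bool, p.1 ∈ M →
          ((p ∈ M0 ↔ lep φ p ∈ arcSet a b) ∧ (p ∈ M1 ↔ lep φ p ∈ arcSet a' b'))) ∧
       ∀ x ∈ M, ∀ y ∈ M, ParR G x y → (lt x y ↔ precInSet φ M0 a x y))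

/-- In the model `φ`, the letters `W0` are placed in the open arc `(c0, d0)`, the letters
`W1` in the open arc `(c1, d1)`, and the two induced reading orders form an (admissible)
oriented permutation model of `(Wset, ∼)` whose first order agrees with `lt` on `∥`-pairs. -/
def AdmissiblePlacedAt (G : SimpleGraph V) (φ : V → Circle1 × Circle1)
    (Wset : Set V) (W0 W1 : Set (V × Bool)) (lt : V → V → Prop)
    (c0 d0 c1 d1 : Circle1) : Prop :=
  (∀ p ∈ W0, sbtw c0 (lep φ p) d0) ∧
  (∀ p ∈ W1, sbtw c1 (lep φ p) d1) ∧
  (∀ x ∈ Wset, ∀ y ∈ Wset, x ≠ y →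
    (Ov G x y ↔ (precInSet φ W0 c0 x y ↔ precInSet φ W1 c1 x y))) ∧
  (∀ x ∈ Wset, ∀ y ∈ Wset, ParR G x y → (lt x y ↔ precInSet φ W0 c0 x y))

/-- An improper prime strong module: `(M,∼)` and `(M,∥)` are connected
and no outside vertex is `∼`-adjacent to all of `M`. -/
def ImproperPrime (G : SimpleGraph V) (M : Set V) : Prop :=
  IsStrongModule G M ∧ ConnOn (Ov G) M ∧ ConnOn (ParR G) M ∧ ¬ ProperModule G M

/-- `U` is a transversal of `M`: it contains exactly one vertex of each child of `M`. -/
def IsTransversal (G : SimpleGraph V) (M U : Set V) : Prop :=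
  U ⊆ M ∧ (∀ N, IsChildOf G M N → ∃! u, u ∈ U ∩ N) ∧
  ∀ u ∈ U, ∃ N, IsChildOf G M N ∧ u ∈ N

/-- A probe `(y, x, X, α(X))` in the graph `(Uset, ∼)`. -/
def IsProbe (G : SimpleGraph V) (Uset : Set V) (y x : V) (X aX : Set V) : Prop :=
  x ≠ y ∧ X.Nonempty ∧ aX.Nonempty ∧
  Disjoint ({x, y} : Set V) X ∧ Disjoint ({x, y} : Set V) aX ∧ Disjoint X aX ∧
  ({x, y} ∪ X ∪ aX) ⊂ Uset ∧
  Ov G y x ∧ (∀ z ∈ X ∪ aX, ParR G y z) ∧ (∀ z ∈ X, Ov G x z) ∧ (∀ z ∈ aX, ParR G x z) ∧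
  ConnOn (Ov G) ({x, y} ∪ X ∪ aX) ∧
  ∀ z ∈ Uset \ ({x, y} ∪ X ∪ aX),
    (∀ w ∈ X ∪ aX, ParR G z w) ∨ ((∀ w ∈ X, Ov G z w) ∧ ∀ w ∈ aX, ParR G z w) ∨
    (∀ w ∈ X ∪ aX, Ov G z w)

/-- The `K`-relation on a child `Mi` of an improper prime module, relative to the
transversal `U`; its equivalence classes are the consistent submodules. -/
def KrelOn (G : SimpleGraph V) (U Mi : Set V) (v v' : V) : Prop :=
  v ∈ Mi ∧ v' ∈ Mi ∧
  (v = v' ∨ PrimeM G Mi ∨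
   (ParallelM G Mi ∧ ∀ u ∈ U \ Mi,
      (v ∈ leftSet G u ∧ v' ∈ leftSet G u) ∨ (v ∈ rightSet G u ∧ v' ∈ rightSet G u)) ∨
   (SerialM G Mi ∧
      ({leftSet G v ∩ (U \ Mi), rightSet G v ∩ (U \ Mi)} : Set (Set V)) =
       {leftSet G v' ∩ (U \ Mi), rightSet G v' ∩ (U \ Mi)}))

/-- `M` is the vertex set of a connected component of `G_ov`. -/
def IsCompOf (G : SimpleGraph V) (M : Set V) : Prop :=
  ∃ v, M = {u | Relation.ReflTransGen (fun a b => Ov G a b ∨ Ov G b a) v u}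

/-- `v` separates the modules `M₁` and `M₂`. -/
def Separates (G : SimpleGraph V) (v : V) (M₁ M₂ : Set V) : Prop :=
  v ∉ M₁ ∪ M₂ ∧
  ((M₁ ⊆ leftSet G v ∧ M₂ ⊆ rightSet G v) ∨ (M₂ ⊆ leftSet G v ∧ M₁ ⊆ rightSet G v))

def NonSep (G : SimpleGraph V) (M₁ M₂ : Set V) : Prop := ¬ ∃ v, Separates G v M₁ M₂

/-- A node: a maximal set of pairwise non-separated components of `G_ov`. -/
def IsNode (G : SimpleGraph V) (N : Set (Set V)) : Prop :=
  (∀ M ∈ N, IsCompOf G M) ∧ (∀ M₁ ∈ N, ∀ M₂ ∈ N, NonSep G M₁ M₂) ∧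
  (∀ M', IsCompOf G M' → (∀ M ∈ N, NonSep G M' M) → M' ∈ N)

/-- The vertex set of the bipartite graph `T_NM` : modules (components of `G_ov`) on the
left, nodes on the right. -/
def TVert (G : SimpleGraph V) : Type _ :=
  {M : Set V // IsCompOf G M} ⊕ {N : Set (Set V) // IsNode G N}

/-- The bipartite graph `T_NM`. -/
def TNM (G : SimpleGraph V) : SimpleGraph (TVert G) where
  Adj x y :=
    match x, y with
    | Sum.inl M, Sum.inr N => M.1 ∈ N.1
    | Sum.inr N, Sum.inl M => M.1 ∈ N.1
    | _, _ => False
  symm := ⟨by rintro (M | N) (M' | N') h <;> exact h⟩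
  loopless := ⟨by rintro (M | N) h <;> exact h⟩

/-- The set of vertices of `G` contained in the modules lying in the connected component
of `T_NM − x₀` containing `y`. -/
def VTavoid (G : SimpleGraph V) (x₀ y : TVert G) : Set V :=
  {u | ∃ M : {M : Set V // IsCompOf G M},
    Relation.ReflTransGen (fun a c => (TNM G).Adj a c ∧ a ≠ x₀ ∧ c ≠ x₀) y (Sum.inl M) ∧
    u ∈ M.1}

section Normalization

attribute [local instance] Classical.propDecidable

/-! ### Real-coordinate toolkit for the circle -/

/-- real cyclic betweenness for three coordinates in a common window. -/
def btw3 (u v w : ℝ) : Prop := (u ≤ v ∧ v ≤ w) ∨ (w ≤ u ∧ u ≤ v) ∨ (v ≤ w ∧ w ≤ u)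

noncomputable def cA (a : ℝ) (x : Circle1) : ℝ :=
  (QuotientAddGroup.equivIcoMod (one_pos (α := ℝ)) a x : ℝ)

lemma cA_mem (a : ℝ) (x : Circle1) : cA a x ∈ Set.Ico a (a + 1) :=
  (QuotientAddGroup.equivIcoMod (one_pos (α := ℝ)) a x).2

lemma cA_coe (a : ℝ) (x : Circle1) : ((cA a x : ℝ) : Circle1) = x := by
  have := (QuotientAddGroup.equivIcoMod (one_pos (α := ℝ)) a).symm_apply_apply x
  exact this

lemma cA_inj {a : ℝ} {x y : Circle1} (h : cA a x = cA a y) : x = y := by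
  have := cA_coe a x; rw [h, cA_coe] at this; exact this.symm

lemma cA_coe_eq {a r : ℝ} (h : r ∈ Set.Ico a (a + 1)) : cA a ((r : ℝ) : Circle1) = r := by
  unfold cA
  rw [QuotientAddGroup.equivIcoMod_coe]
  exact (toIcoMod_eq_self _).2 h

lemma toIco_eval {a u v : ℝ} (hu : u ∈ Set.Ico a (a+1)) (hv : v ∈ Set.Ico a (a+1)) :
    toIcoMod (one_pos (α := ℝ)) u v = if u ≤ v then v else v + 1 := by
  obtain ⟨hu1, hu2⟩ := hu; obtain ⟨hv1, hv2⟩ := hv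
  split
  · exact (toIcoMod_eq_self _).2 ⟨by assumption, by linarith⟩
  · rw [show v + 1 = v + (1:ℝ) from rfl, ← toIcoMod_add_right]
    exact (toIcoMod_eq_self _).2 ⟨by linarith, by linarith⟩

lemma toIoc_eval {a u w : ℝ} (hu : u ∈ Set.Ico a (a+1)) (hw : w ∈ Set.Ico a (a+1)) :
    toIocMod (one_pos (α := ℝ)) u w = if u < w then w else w + 1 := by
  obtain ⟨hu1, hu2⟩ := hu; obtain ⟨hw1, hw2⟩ := hw
  split
  · exact (toIocMod_eq_self _).2 ⟨by assumption, by linarith⟩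
  · rw [show w + 1 = w + (1:ℝ) from rfl, ← toIocMod_add_right]
    exact (toIocMod_eq_self _).2 ⟨by linarith, by linarith⟩

lemma btw_coe_iff3 {a u v w : ℝ} (hu : u ∈ Set.Ico a (a+1)) (hv : v ∈ Set.Ico a (a+1))
    (hw : w ∈ Set.Ico a (a+1)) :
    btw ((u : ℝ) : Circle1) ((v : ℝ) : Circle1) ((w : ℝ) : Circle1) ↔ btw3 u v w := by
  rw [show ∀ r : ℝ, ((r : ℝ) : Circle1)
      = (QuotientAddGroup.mk r : ℝ ⧸ AddSubgroup.zmultiples (1:ℝ)) from fun _ => rfl]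
  rw [QuotientAddGroup.btw_coe_iff]
  rw [show toIcoMod Fact.out u v = toIcoMod (one_pos (α := ℝ)) u v from rfl]
  rw [show toIocMod Fact.out u w = toIocMod (one_pos (α := ℝ)) u w from rfl]
  rw [toIco_eval hu hv, toIoc_eval hu hw]
  obtain ⟨hu1, hu2⟩ := hu; obtain ⟨hv1, hv2⟩ := hv; obtain ⟨hw1, hw2⟩ := hw
  unfold btw3
  split <;> split <;> constructor <;> intro h <;>
    first
      | (left; constructor <;> linarith)
      | (right; left; constructor <;> linarith)
      | (right; right; constructor <;> linarith)
      | (rcases h with ⟨h1,h2⟩|⟨h1,h2⟩|⟨h1,h2⟩ <;> linarith)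

lemma btw_iff (a : ℝ) (x y z : Circle1) :
    btw x y z ↔ btw3 (cA a x) (cA a y) (cA a z) := by
  conv_lhs => rw [← cA_coe a x, ← cA_coe a y, ← cA_coe a z]
  exact btw_coe_iff3 (cA_mem a x) (cA_mem a y) (cA_mem a z)

lemma exists_base (x : Circle1) : ∃ a : ℝ, cA a x = a := by
  have hx := cA_coe 0 x
  have h2 : cA (cA 0 x) ((cA 0 x : ℝ) : Circle1) = cA 0 x :=
    cA_coe_eq ⟨le_refl _, lt_add_one _⟩
  rw [hx] at h2
  exact ⟨cA 0 x, h2⟩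

variable {V : Type*}

lemma mem_arc (a : ℝ) {x : Circle1} {c : Circle1 × Circle1} :
    x ∈ arcPts c ↔ btw3 (cA a c.1) (cA a x) (cA a c.2) := btw_iff a c.1 x c.2

lemma btw3_ll (u w : ℝ) : btw3 u u w := by
  rcases le_total u w with h | h
  · exact Or.inl ⟨le_refl _, h⟩
  · exact Or.inr (Or.inl ⟨h, le_refl _⟩)

lemma btw3_rr (u w : ℝ) : btw3 u w w := by
  rcases le_total u w with h | h
  · exact Or.inl ⟨h, le_refl _⟩
  · exact Or.inr (Or.inr ⟨le_refl _, h⟩)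

lemma mem_arc_left (c : Circle1 × Circle1) : c.1 ∈ arcPts c :=
  (mem_arc 0).2 (btw3_ll _ _)

lemma mem_arc_right (c : Circle1 × Circle1) : c.2 ∈ arcPts c :=
  (mem_arc 0).2 (btw3_rr _ _)

lemma mem_nowrap {a : ℝ} {c : Circle1 × Circle1} (h : cA a c.1 < cA a c.2) {x : Circle1} :
    x ∈ arcPts c ↔ cA a c.1 ≤ cA a x ∧ cA a x ≤ cA a c.2 := by
  rw [mem_arc a]
  unfold btw3
  constructor
  · rintro (⟨h1,h2⟩|⟨h1,h2⟩|⟨h1,h2⟩) <;> constructor <;> linarith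
  · intro ⟨h1, h2⟩; exact Or.inl ⟨h1, h2⟩

lemma mem_wrap {a : ℝ} {c : Circle1 × Circle1} (h : cA a c.2 < cA a c.1) {x : Circle1} :
    x ∈ arcPts c ↔ cA a c.1 ≤ cA a x ∨ cA a x ≤ cA a c.2 := by
  rw [mem_arc a]
  unfold btw3
  constructor
  · rintro (⟨h1,h2⟩|⟨h1,h2⟩|⟨h1,h2⟩)
    · exact Or.inl (by linarith)
    · exact Or.inl h2
    · exact Or.inr h1
  · rintro (h1 | h1)
    · exact Or.inr (Or.inl ⟨h.le, h1⟩)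
    · exact Or.inr (Or.inr ⟨h1, h.le⟩)

lemma mem_base1 {a : ℝ} {c : Circle1 × Circle1} (h1 : cA a c.1 = a) (h2 : cA a c.2 ≠ a)
    {x : Circle1} : x ∈ arcPts c ↔ cA a x ≤ cA a c.2 := by
  have hb := cA_mem a c.2
  have hx := cA_mem a x
  rw [mem_nowrap (by rw [h1]; exact lt_of_le_of_ne hb.1 (Ne.symm h2))]
  constructor
  · exact fun h => h.2
  · exact fun h => ⟨by rw [h1]; exact hx.1, h⟩

lemma mem_base2 {a : ℝ} {c : Circle1 × Circle1} (h2 : cA a c.2 = a) (h1 : cA a c.1 ≠ a)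
    {x : Circle1} : x ∈ arcPts c ↔ cA a c.1 ≤ cA a x ∨ cA a x = a := by
  have hb := cA_mem a c.1
  have hx := cA_mem a x
  rw [mem_wrap (by rw [h2]; exact lt_of_le_of_ne hb.1 (Ne.symm h1))]
  rw [h2]
  constructor
  · rintro (h | h)
    · exact Or.inl h
    · exact Or.inr (le_antisymm h hx.1)
  · rintro (h | h)
    · exact Or.inl h
    · exact Or.inr (le_of_eq h)

/-! ### Graph-side lemmas -/

lemma mem_cnbr {G : SimpleGraph V} {v w : V} : w ∈ cnbr G v ↔ w = v ∨ G.Adj v w := by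
  simp [cnbr]

lemma self_mem_cnbr (G : SimpleGraph V) (v : V) : v ∈ cnbr G v := mem_cnbr.2 (Or.inl rfl)

variable {G : SimpleGraph V} {ψ : V → Circle1 × Circle1}

lemma lep_inj (hm : IsCAModel G ψ) : Function.Injective (lep ψ) := by
  intro p q h
  exact hm.1 (by simp) (by simp) h

lemma arc_fst_ne_snd (hm : IsCAModel G ψ) (v : V) : (ψ v).1 ≠ (ψ v).2 := by
  intro h
  have : lep ψ (v, false) = lep ψ (v, true) := h
  simpa using lep_inj hm this

lemma ept_ne (hm : IsCAModel G ψ) {x y : V} {b b' : Bool} (h : (x, b) ≠ (y, b')) :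
    lep ψ (x, b) ≠ lep ψ (y, b') := fun he => h (lep_inj hm he)

lemma adj_iff (hm : IsCAModel G ψ) {x y : V} (h : x ≠ y) :
    G.Adj x y ↔ (arcPts (ψ x) ∩ arcPts (ψ y)).Nonempty := hm.2 x y h

lemma subnbr (hm : IsCAModel G ψ) {x y : V} (hxy : x ≠ y)
    (h : arcPts (ψ x) ⊆ arcPts (ψ y)) : cnbr G x ⊆ cnbr G y := by
  intro z hz
  rcases mem_cnbr.1 hz with rfl | hadj
  · exact mem_cnbr.2 (Or.inr ((adj_iff hm (Ne.symm hxy)).2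
      ⟨(ψ z).1, h (mem_arc_left _), mem_arc_left _⟩))
  · by_cases hzy : z = y
    · exact hzy ▸ self_mem_cnbr G y
    · obtain ⟨w, hw1, hw2⟩ := (adj_iff hm hadj.ne).1 hadj
      exact mem_cnbr.2 (Or.inr ((adj_iff hm (fun hh => hzy hh.symm)).2
        ⟨w, h hw1, hw2⟩))

lemma inter_nonempty_of_union_univ {c d : Circle1 × Circle1}
    (h : arcPts c ∪ arcPts d = Set.univ) : (arcPts c ∩ arcPts d).Nonempty := by
  obtain ⟨a, ha⟩ := exists_base c.1
  set p2 := cA a c.2 with hp2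
  have hp2m := cA_mem a c.2
  by_cases hp2a : p2 = a
  · -- c is the full circle
    refine ⟨d.1, ?_, mem_arc_left d⟩
    rw [mem_arc a, ha, ← hp2, hp2a]
    have := cA_mem a d.1
    rcases le_total (cA a d.1) a with h1 | h1
    · exact Or.inl ⟨this.1, h1⟩
    · exact Or.inr (Or.inl ⟨le_refl a, h1⟩)
  have hp2gt : a < p2 := lt_of_le_of_ne hp2m.1 (Ne.symm hp2a)
  set q1 := cA a d.1 with hq1
  set q2 := cA a d.2 with hq2
  have hq1m := cA_mem a d.1
  have hq2m := cA_mem a d.2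
  rcases lt_trichotomy q1 q2 with hlt | heq | hgt
  · by_cases hq1p : q1 ≤ p2
    · exact ⟨d.1, (mem_base1 ha hp2a).2 hq1p, mem_arc_left d⟩
    · exfalso
      push_neg at hq1p
      set r0 := (p2 + q1)/2 with hr0
      have hr0m : r0 ∈ Set.Ico a (a+1) := ⟨by simp only [hr0]; linarith, by simp only [hr0]; linarith [hq1m.2]⟩
      have hx : ((r0 : ℝ) : Circle1) ∈ arcPts c ∪ arcPts d := h ▸ Set.mem_univ _
      rcases hx with hx | hx
      · rw [mem_base1 ha hp2a, cA_coe_eq hr0m] at hx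
        simp only [hr0] at hx; linarith
      · rw [mem_nowrap hlt, cA_coe_eq hr0m] at hx
        simp only [hr0] at hx; rcases hx with ⟨hx1, _⟩; linarith
  · -- degenerate d: full circle
    refine ⟨c.1, mem_arc_left c, ?_⟩
    rw [mem_arc a, ha, ← hq1, ← hq2, ← heq]
    rcases le_total q1 a with h1 | h1
    · exact Or.inl ⟨h1, hq1m.1⟩
    · exact Or.inr (Or.inr ⟨h1, le_refl _⟩)
  · refine ⟨c.1, mem_arc_left c, ?_⟩
    rw [mem_wrap hgt, ha]
    exact Or.inr hq2m.1

lemma univ_cc (htw : NoTwins G) (hm : IsCAModel G ψ) {v u : V} (hvu : v ≠ u)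
    (h : arcPts (ψ v) ∪ arcPts (ψ u) = Set.univ) : Cc G v u := by
  have hadj : G.Adj v u := (adj_iff hm hvu).2 (inter_nonempty_of_union_univ h)
  have hsub : ∀ w, w ≠ v → w ≠ u → ¬ G.Adj u w → arcPts (ψ w) ⊆ arcPts (ψ v) := by
    intro w hwv hwu hna z hz
    have : z ∈ arcPts (ψ v) ∪ arcPts (ψ u) := h ▸ Set.mem_univ _
    rcases this with hz' | hz'
    · exact hz'
    · exact absurd ((adj_iff hm (Ne.symm hwu)).2 ⟨z, hz', hz⟩) hna
  have hsub' : ∀ w, w ≠ v → w ≠ u → ¬ G.Adj v w → arcPts (ψ w) ⊆ arcPts (ψ u) := by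
    intro w hwv hwu hna z hz
    have : z ∈ arcPts (ψ v) ∪ arcPts (ψ u) := h ▸ Set.mem_univ _
    rcases this with hz' | hz'
    · exact absurd ((adj_iff hm (Ne.symm hwv)).2 ⟨z, hz', hz⟩) hna
    · exact hz'
  refine ⟨hvu, hadj, ?_, ?_, ?_⟩
  · apply Set.eq_univ_of_forall
    intro w
    by_cases hwv : w = v
    · exact Set.mem_union_left _ (hwv ▸ self_mem_cnbr G v)
    by_cases hwu : w = u
    · exact Set.mem_union_right _ (hwu ▸ self_mem_cnbr G u)
    by_cases hadjv : G.Adj v w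
    · exact Set.mem_union_left _ (mem_cnbr.2 (Or.inr hadjv))
    by_cases hadju : G.Adj u w
    · exact Set.mem_union_right _ (mem_cnbr.2 (Or.inr hadju))
    · exfalso
      exact hadjv (((adj_iff hm (fun hh => hwv hh.symm)).2
        ⟨(ψ w).1, hsub w hwv hwu hadju (mem_arc_left _), mem_arc_left _⟩))
  · intro w hw
    obtain ⟨hw1, hw2⟩ := hw
    have hwu : w ≠ u := fun hh => hw2 (hh ▸ self_mem_cnbr G u)
    have hwv : w ≠ v := fun hh => hw2 (hh ▸ mem_cnbr.2 (Or.inr hadj.symm))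
    have hna : ¬ G.Adj u w := fun hh => hw2 (mem_cnbr.2 (Or.inr hh))
    refine lt_of_le_of_ne (subnbr hm hwv (hsub w hwv hwu hna)) (htw w v hwv)
  · intro w hw
    obtain ⟨hw1, hw2⟩ := hw
    have hwv : w ≠ v := fun hh => hw2 (hh ▸ self_mem_cnbr G v)
    have hwu : w ≠ u := fun hh => hw2 (hh ▸ mem_cnbr.2 (Or.inr hadj))
    have hna : ¬ G.Adj v w := fun hh => hw2 (mem_cnbr.2 (Or.inr hh))
    refine lt_of_le_of_ne (subnbr hm hwu (hsub' w hwv hwu hna)) (htw w u hwu)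

end Normalization

section Normalization2

attribute [local instance] Classical.propDecidable

variable {V : Type*} {G : SimpleGraph V} {ψ : V → Circle1 × Circle1}

lemma overlap_pos {c d : Circle1 × Circle1}
    (h12 : c.1 ≠ c.2) (h34 : d.1 ≠ d.2) (h13 : c.1 ≠ d.1) (h14 : c.1 ≠ d.2)
    (h23 : c.2 ≠ d.1) (h24 : c.2 ≠ d.2)
    (hne : (arcPts c ∩ arcPts d).Nonempty) (hcd : ¬ arcPts c ⊆ arcPts d)
    (hdc : ¬ arcPts d ⊆ arcPts c) (hu : arcPts c ∪ arcPts d ≠ Set.univ) :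
    (d.1 ∉ arcPts c ∧ d.2 ∈ arcPts c ∧ c.1 ∈ arcPts d ∧ c.2 ∉ arcPts d) ∨
    (d.1 ∈ arcPts c ∧ d.2 ∉ arcPts c ∧ c.1 ∉ arcPts d ∧ c.2 ∈ arcPts d) := by
  obtain ⟨a, ha⟩ := exists_base c.1
  have hpm := cA_mem a c.2
  have hq1m := cA_mem a d.1
  have hq2m := cA_mem a d.2
  set p2 := cA a c.2 with hp2d
  set q1 := cA a d.1 with hq1d
  set q2 := cA a d.2 with hq2d
  have hp2a : p2 ≠ a := fun h => h12 (cA_inj (by rw [← hp2d, h, ha]) : c.2 = c.1).symm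
  have hq1a : q1 ≠ a := fun h => h13 (cA_inj (by rw [← hq1d, h, ha]) : d.1 = c.1).symm
  have hq2a : q2 ≠ a := fun h => h14 (cA_inj (by rw [← hq2d, h, ha]) : d.2 = c.1).symm
  have hq12 : q1 ≠ q2 := fun h => h34 (cA_inj (by rw [← hq1d, ← hq2d, h]))
  have hq1p : q1 ≠ p2 := fun h => h23 (cA_inj (by rw [← hq1d, ← hp2d, h])).symm
  have hq2p : q2 ≠ p2 := fun h => h24 (cA_inj (by rw [← hq2d, ← hp2d, h])).symm
  have hp2gt : a < p2 := lt_of_le_of_ne hpm.1 (Ne.symm hp2a)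
  have hq1gt : a < q1 := lt_of_le_of_ne hq1m.1 (Ne.symm hq1a)
  have hq2gt : a < q2 := lt_of_le_of_ne hq2m.1 (Ne.symm hq2a)
  have memc : ∀ x : Circle1, x ∈ arcPts c ↔ cA a x ≤ p2 := fun x => mem_base1 ha hp2a
  rcases lt_or_gt_of_ne hq12 with hlt | hgt
  · -- d does not wrap
    have memd : ∀ x : Circle1, x ∈ arcPts d ↔ q1 ≤ cA a x ∧ cA a x ≤ q2 :=
      fun x => mem_nowrap hlt
    rcases lt_trichotomy q2 p2 with h1 | h1 | h1
    · exact absurd (fun z hz => (memc z).2 (le_trans ((memd z).1 hz).2 h1.le)) hdc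
    · exact absurd h1 hq2p
    · rcases lt_trichotomy q1 p2 with h2 | h2 | h2
      · refine Or.inr ⟨(memc d.1).2 h2.le, ?_, ?_, (memd c.2).2 ⟨h2.le, h1.le⟩⟩
        · rw [memc]; exact not_le.2 h1
        · rw [memd, ha]; exact fun hh => absurd hh.1 (not_le.2 hq1gt)
      · exact absurd h2 hq1p
      · exfalso
        obtain ⟨z, hz1, hz2⟩ := hne
        have e1 := ((memd z).1 hz2).1
        have e2 := (memc z).1 hz1
        linarith
  · -- d wraps through the base point c.1
    have memd : ∀ x : Circle1, x ∈ arcPts d ↔ q1 ≤ cA a x ∨ cA a x ≤ q2 :=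
      fun x => mem_wrap hgt
    rcases lt_trichotomy p2 q2 with h1 | h1 | h1
    · exact absurd (fun z hz => (memd z).2 (Or.inr (le_trans ((memc z).1 hz) h1.le))) hcd
    · exact absurd h1.symm hq2p
    · rcases lt_trichotomy p2 q1 with h2 | h2 | h2
      · refine Or.inl ⟨?_, (memc d.2).2 h1.le, (memd c.1).2 (Or.inr (by rw [ha]; exact hq2gt.le)), ?_⟩
        · rw [memc]; exact not_le.2 h2
        · rw [memd]; push_neg
          exact ⟨h2, h1⟩
      · exact absurd h2.symm hq1p
      · exfalso
        apply hu
        apply Set.eq_univ_of_forall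
        intro x
        rcases le_or_gt (cA a x) p2 with h3 | h3
        · exact Set.mem_union_left _ ((memc x).2 h3)
        · exact Set.mem_union_right _ ((memd x).2 (Or.inl (by linarith)))

lemma lep_update_ne {v : V} {c' : Circle1 × Circle1} {p : V × Bool} (h : p.1 ≠ v) :
    lep (Function.update ψ v c') p = lep ψ p := by
  unfold lep
  rw [Function.update_of_ne h]

lemma core_extend (hm : IsCAModel G ψ) (v : V) (c' : Circle1 × Circle1)
    (hfresh : ∀ p : V × Bool, p.1 ≠ v → lep ψ p ≠ c'.1 ∧ lep ψ p ≠ c'.2)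
    (hne : c'.1 ≠ c'.2)
    (hgrow : arcPts (ψ v) ⊆ arcPts c')
    (hadj : ∀ w, w ≠ v → (arcPts (ψ w) ∩ arcPts c').Nonempty → G.Adj v w) :
    IsCAModel G (Function.update ψ v c') := by
  constructor
  · intro p _ q _ h
    by_cases hp : p.1 = v <;> by_cases hq : q.1 = v
    · -- both endpoints of the updated arc
      have hp' : lep (Function.update ψ v c') p = if p.2 then c'.2 else c'.1 := by
        unfold lep; rw [hp, Function.update_self]
      have hq' : lep (Function.update ψ v c') q = if q.2 then c'.2 else c'.1 := by
        unfold lep; rw [hq, Function.update_self]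
      rw [hp', hq'] at h
      have : p.2 = q.2 := by
        by_contra hb
        rcases Bool.eq_false_or_eq_true p.2 with h2 | h2 <;>
          rcases Bool.eq_false_or_eq_true q.2 with h3 | h3 <;>
            simp [h2, h3] at h hb <;> exact hne (by rw [h])
      exact Prod.ext (hp.trans hq.symm) this
    · exfalso
      have hp' : lep (Function.update ψ v c') p = if p.2 then c'.2 else c'.1 := by
        unfold lep; rw [hp, Function.update_self]
      rw [hp', lep_update_ne hq] at h
      rcases Bool.eq_false_or_eq_true p.2 with h2 | h2 <;> simp [h2] at h
      · exact (hfresh q hq).2 h.symm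
      · exact (hfresh q hq).1 h.symm
    · exfalso
      have hq' : lep (Function.update ψ v c') q = if q.2 then c'.2 else c'.1 := by
        unfold lep; rw [hq, Function.update_self]
      rw [hq', lep_update_ne hp] at h
      rcases Bool.eq_false_or_eq_true q.2 with h2 | h2 <;> simp [h2] at h
      · exact (hfresh p hp).2 h
      · exact (hfresh p hp).1 h
    · rw [lep_update_ne hp, lep_update_ne hq] at h
      exact hm.1 (by simp) (by simp) h
  · intro x y hxy
    by_cases hx : x = v <;> by_cases hy : y = v
    · exact absurd (hx.trans hy.symm) hxy
    · subst hx
      rw [Function.update_self, Function.update_of_ne hy]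
      constructor
      · intro h
        obtain ⟨z, hz1, hz2⟩ := (hm.2 x y hxy).1 h
        exact ⟨z, hgrow hz1, hz2⟩
      · intro ⟨z, hz1, hz2⟩
        exact hadj y hy ⟨z, hz2, hz1⟩
    · subst hy
      rw [Function.update_self, Function.update_of_ne hx]
      constructor
      · intro h
        obtain ⟨z, hz1, hz2⟩ := (hm.2 x y hxy).1 h
        exact ⟨z, hz1, hgrow hz2⟩
      · intro ⟨z, hz1, hz2⟩
        exact (hadj x hx ⟨z, hz1, hz2⟩).symm
    · rw [Function.update_of_ne hx, Function.update_of_ne hy]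
      exact hm.2 x y hxy

lemma Cc.symm' {v u : V} (h : Cc G v u) : Cc G u v :=
  ⟨h.1.symm, h.2.1.symm, by rw [Set.union_comm]; exact h.2.2.1, h.2.2.2.2, h.2.2.2.1⟩

lemma Cs_not_Cc (hun : NoUniversal G) {v u : V} (hcs : Cs G v u) (hcc : Cc G v u) : False := by
  apply hun v
  have h1 : cnbr G u ⊆ cnbr G v := hcs.2.subset
  have h2 := hcc.2.2.1
  rw [Set.union_eq_self_of_subset_right h1] at h2
  exact h2

lemma cs_adj {v u : V} (hcs : Cs G v u) : G.Adj v u := by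
  have := hcs.2.subset (self_mem_cnbr G u)
  rcases mem_cnbr.1 this with h | h
  · exact (hcs.1 h.symm).elim
  · exact h

/-- Final assembly: a model in which all `Cs` pairs are arc-contained and all
`Cc` pairs cover the circle is normalized. -/
lemma norm_of_good (htw : NoTwins G) (hun : NoUniversal G) (hm : IsCAModel G ψ)
    (hcs : ∀ v u : V, Cs G v u → arcPts (ψ u) ⊆ arcPts (ψ v))
    (hcc : ∀ v u : V, Cc G v u → arcPts (ψ v) ∪ arcPts (ψ u) = Set.univ) :
    IsNormalizedModel G ψ := by
  have arcne : ∀ x y : V, x ≠ y → arcPts (ψ x) ≠ arcPts (ψ y) := by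
    intro x y hxy he
    exact htw x y hxy (Set.Subset.antisymm (subnbr hm hxy he.subset)
      (subnbr hm hxy.symm he.symm.subset))
  have csiff : ∀ v u : V, v ≠ u → (Cs G v u ↔ arcPts (ψ u) ⊂ arcPts (ψ v)) := by
    intro v u hvu
    constructor
    · intro h
      exact lt_of_le_of_ne (hcs v u h) (arcne u v hvu.symm)
    · intro h
      exact ⟨hvu, lt_of_le_of_ne (subnbr hm hvu.symm h.subset) (htw u v hvu.symm)⟩
  have cciff : ∀ v u : V, v ≠ u → (Cc G v u ↔ arcPts (ψ v) ∪ arcPts (ψ u) = Set.univ) := by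
    intro v u hvu
    exact ⟨fun h => hcc v u h, fun h => univ_cc htw hm hvu h⟩
  refine ⟨hm, ?_⟩
  intro u v huv
  have hvu : v ≠ u := huv.symm
  have diiff : Di G v u ↔ arcPts (ψ v) ∩ arcPts (ψ u) = ∅ := by
    constructor
    · intro h
      by_contra hne
      exact h.2 ((adj_iff hm hvu).2 (Set.nonempty_iff_ne_empty.2 hne))
    · intro h
      exact ⟨hvu, fun ha => by
        obtain ⟨z, hz⟩ := (adj_iff hm hvu).1 ha
        exact absurd (h ▸ hz : z ∈ (∅ : Set Circle1)) (Set.notMem_empty z)⟩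
  refine ⟨diiff, csiff v u hvu, ?_, cciff v u hvu, ?_⟩
  · -- Cd v u ↔ arc v ⊂ arc u
    constructor
    · intro h
      exact (csiff u v huv).1 ⟨huv, h.2⟩
    · intro h
      exact ⟨hvu, ((csiff u v huv).2 h).2⟩
  · -- Ov ↔ ArcsOverlap
    constructor
    · intro h
      obtain ⟨_, hdi, hcs', hcd', hcc'⟩ := h
      refine ⟨?_, ?_, ?_, ?_⟩
      · by_contra hne
        exact hdi ⟨hvu, fun ha => hne ((adj_iff hm hvu).1 ha)⟩
      · intro hsub
        rcases lt_or_eq_of_le hsub with hlt | heq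
        · exact hcd' ⟨hvu, ((csiff u v huv).2 hlt).2⟩
        · exact arcne v u hvu heq
      · intro hsub
        rcases lt_or_eq_of_le hsub with hlt | heq
        · exact hcs' ((csiff v u hvu).2 hlt)
        · exact arcne u v huv heq
      · intro hu
        exact hcc' ((cciff v u hvu).2 hu)
    · intro ⟨hne, hsub1, hsub2, hu⟩
      refine ⟨hvu, ?_, ?_, ?_, ?_⟩
      · intro hdi
        obtain ⟨z, hz⟩ := hne
        exact hdi.2 ((adj_iff hm hvu).2 ⟨z, hz⟩)
      · intro h
        exact hsub2 ((csiff v u hvu).1 h).subset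
      · intro h
        exact hsub1 ((csiff u v huv).1 ⟨huv, h.2⟩).subset
      · intro h
        exact hu ((cciff v u hvu).1 h)

end Normalization2

section Surgery

attribute [local instance] Classical.propDecidable

lemma exists_slack (E : Finset ℝ) {a p : ℝ} (hap : a < p) :
    ∃ r, a < r ∧ r < p ∧ ∀ e ∈ E, (e < p → e < r) ∧ r ≠ e := by
  classical
  have hne : (insert a (E.filter (fun e => e < p))).Nonempty := ⟨a, Finset.mem_insert_self _ _⟩
  set m := (insert a (E.filter (fun e => e < p))).max' hne with hm
  have hma : a ≤ m := Finset.le_max' _ a (Finset.mem_insert_self _ _)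
  have hmp : m < p := by
    rw [hm, Finset.max'_lt_iff]
    intro e he
    rcases Finset.mem_insert.1 he with rfl | he
    · exact hap
    · exact (Finset.mem_filter.1 he).2
  refine ⟨(m + p)/2, by linarith, by linarith, ?_⟩
  intro e he
  have hkey : e < p → e ≤ m := fun hep =>
    Finset.le_max' _ e (Finset.mem_insert_of_mem
      (show e ∈ E.filter (fun x => x < p) from Finset.mem_filter.2 ⟨he, hep⟩))
  constructor
  · intro hep; have := hkey hep; linarith
  · intro hre
    rcases lt_or_ge e p with h1 | h1
    · have := hkey h1; linarith
    · rw [← hre] at h1; linarith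

lemma exists_slack' (E : Finset ℝ) {q b : ℝ} (hqb : q < b) :
    ∃ r, q < r ∧ r < b ∧ ∀ e ∈ E, (q < e → r < e) ∧ r ≠ e := by
  classical
  have hne : (insert b (E.filter (fun e => q < e))).Nonempty := ⟨b, Finset.mem_insert_self _ _⟩
  set m := (insert b (E.filter (fun e => q < e))).min' hne with hm
  have hmb : m ≤ b := Finset.min'_le _ b (Finset.mem_insert_self _ _)
  have hqm : q < m := by
    rw [hm, Finset.lt_min'_iff]
    intro e he
    rcases Finset.mem_insert.1 he with rfl | he
    · exact hqb
    · exact (Finset.mem_filter.1 he).2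
  refine ⟨(q + m)/2, by linarith, by linarith, ?_⟩
  intro e he
  have hkey : q < e → m ≤ e := fun hep =>
    Finset.min'_le _ e (Finset.mem_insert_of_mem
      (show e ∈ E.filter (fun x => q < x) from Finset.mem_filter.2 ⟨he, hep⟩))
  constructor
  · intro hep; have := hkey hep; linarith
  · intro hre
    rcases lt_or_ge q e with h1 | h1
    · have := hkey h1; linarith
    · rw [← hre] at h1; linarith

lemma btw3_shift {r p x y z : ℝ} (hx : x < r ∨ p < x) (hy : y < r ∨ p < y)
    (hrz : r ≤ z) (hzp : z < p) (h : btw3 x z y) : btw3 x p y := by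
  unfold btw3 at *
  rcases hx with hx | hx <;> rcases hy with hy | hy <;>
    rcases h with ⟨h1,h2⟩|⟨h1,h2⟩|⟨h1,h2⟩ <;>
      first
        | (left; constructor <;> linarith)
        | (right; left; constructor <;> linarith)
        | (right; right; constructor <;> linarith)

lemma btw3_shift' {r q x y z : ℝ} (hx : x ≤ q ∨ r < x) (hy : y ≤ q ∨ r < y)
    (hqz : q < z) (hzr : z ≤ r) (h : btw3 x z y) : btw3 x q y := by
  unfold btw3 at *
  rcases hx with hx | hx <;> rcases hy with hy | hy <;>
    rcases h with ⟨h1,h2⟩|⟨h1,h2⟩|⟨h1,h2⟩ <;>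
      first
        | (left; constructor <;> linarith)
        | (right; left; constructor <;> linarith)
        | (right; right; constructor <;> linarith)

variable {V : Type*} [Fintype V] {G : SimpleGraph V} {ψ : V → Circle1 × Circle1}

lemma coord_ne (hm : IsCAModel G ψ) (a : ℝ) {p1 p2 : V × Bool} (h : p1 ≠ p2) :
    cA a (lep ψ p1) ≠ cA a (lep ψ p2) := fun he => h (lep_inj hm (cA_inj he))

lemma lep_fst' (ψ : V → Circle1 × Circle1) (v : V) : lep ψ (v, false) = (ψ v).1 := rfl

lemma lep_snd' (ψ : V → Circle1 × Circle1) (v : V) : lep ψ (v, true) = (ψ v).2 := rfl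

/-- The finite set of endpoint coordinates of a model. -/
noncomputable def eptCoords [Fintype V] (ψ : V → Circle1 × Circle1) (a : ℝ) : Finset ℝ :=
  Finset.univ.image (fun pr' : V × Bool => cA a (lep ψ pr'))

lemma coordE_mem [Fintype V] (ψ : V → Circle1 × Circle1) (a : ℝ) (pr : V × Bool) :
    cA a (lep ψ pr) ∈ eptCoords ψ a :=
  Finset.mem_image_of_mem _ (Finset.mem_univ pr)

lemma fixCsA (hm : IsCAModel G ψ) {v u : V} (hvu : v ≠ u)
    (hadjvu : G.Adj v u) (hsub : cnbr G u ⊆ cnbr G v)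
    (hP : (ψ u).1 ∉ arcPts (ψ v)) (hQ : (ψ u).2 ∈ arcPts (ψ v)) :
    ∃ ψ' : V → Circle1 × Circle1, IsCAModel G ψ' ∧ (∀ w, w ≠ v → ψ' w = ψ w) ∧
      (∀ w, arcPts (ψ w) ⊆ arcPts (ψ' w)) ∧ arcPts (ψ u) ⊆ arcPts (ψ' v) := by
  obtain ⟨a, ha⟩ := exists_base (ψ v).2
  set s := cA a (ψ v).1 with hsd
  set p := cA a (ψ u).1 with hpd
  set q := cA a (ψ u).2 with hqd
  have hsm := cA_mem a (ψ v).1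
  have hpm := cA_mem a (ψ u).1
  have hqm := cA_mem a (ψ u).2
  have hsa : s ≠ a := fun h =>
    arc_fst_ne_snd hm v (cA_inj (by rw [← hsd, h, ha]) : (ψ v).1 = (ψ v).2)
  have hqa : q ≠ a := by
    intro h
    exact coord_ne hm a (show ((u, true) : V × Bool) ≠ (v, true) by simp [hvu.symm])
      (by rw [show lep ψ ((u:V), true) = (ψ u).2 from rfl,
              show lep ψ ((v:V), true) = (ψ v).2 from rfl, ← hqd, h, ha])
  have memv : ∀ x : Circle1, x ∈ arcPts (ψ v) ↔ (s ≤ cA a x ∨ cA a x = a) :=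
    fun x => mem_base2 ha hsa
  have hPc := (not_iff_not.2 (memv (ψ u).1)).1 hP
  push_neg at hPc
  have hps : p < s := hPc.1
  have hpa : p ≠ a := hPc.2
  have hsq : s < q := by
    rcases (memv (ψ u).2).1 hQ with h | h
    · exact lt_of_le_of_ne h (coord_ne hm a
        (show ((v, false) : V × Bool) ≠ (u, true) by simp [hvu]))
    · exact absurd h hqa
  have hap : a < p := lt_of_le_of_ne hpm.1 (Ne.symm hpa)
  have hpq : p < q := lt_trans hps hsq
  have memu : ∀ x : Circle1, x ∈ arcPts (ψ u) ↔ p ≤ cA a x ∧ cA a x ≤ q :=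
    fun x => mem_nowrap hpq
  obtain ⟨r, har, hrp, hr⟩ := exists_slack (eptCoords ψ a) hap
  have hrw : r ∈ Set.Ico a (a + 1) := ⟨har.le, by linarith [hpm.2]⟩
  set n : Circle1 := ((r : ℝ) : Circle1) with hnd
  have hn : cA a n = r := cA_coe_eq hrw
  have hfreshn : ∀ pr' : V × Bool, lep ψ pr' ≠ n := by
    intro pr' he
    exact (hr _ (coordE_mem ψ a pr')).2 (by rw [he, hn])
  set c' : Circle1 × Circle1 := (n, (ψ v).2) with hc'd
  have hc'1 : cA a c'.1 = r := hn
  have hc'2 : cA a c'.2 = a := ha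
  have memc' : ∀ x : Circle1, x ∈ arcPts c' ↔ (r ≤ cA a x ∨ cA a x = a) := by
    intro x
    rw [mem_base2 hc'2 (by rw [hc'1]; intro h; linarith), hc'1]
  have hgrow : arcPts (ψ v) ⊆ arcPts c' := by
    intro z hz
    rcases (memv z).1 hz with h | h
    · exact (memc' z).2 (Or.inl (by linarith))
    · exact (memc' z).2 (Or.inr h)
  have hadjc : ∀ w, w ≠ v → (arcPts (ψ w) ∩ arcPts c').Nonempty → G.Adj v w := by
    intro w hw ⟨z, hzw, hzc⟩
    by_cases hwu : w = u
    · exact hwu ▸ hadjvu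
    rcases (memc' z).1 hzc with hrz | hza
    · by_cases hzs : s ≤ cA a z
      · exact (adj_iff hm (Ne.symm hw)).2 ⟨z, (memv z).2 (Or.inl hzs), hzw⟩
      push_neg at hzs
      by_cases hzp : p ≤ cA a z
      · have hzu : z ∈ arcPts (ψ u) := (memu z).2 ⟨hzp, by linarith⟩
        have hadjuw : G.Adj u w := (adj_iff hm (fun hh => hwu hh.symm)).2 ⟨z, hzu, hzw⟩
        rcases mem_cnbr.1 (hsub (mem_cnbr.2 (Or.inr hadjuw))) with h | h
        · exact absurd h hw
        · exact h
      push_neg at hzp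
      have hPw : (ψ u).1 ∈ arcPts (ψ w) := by
        have hepts : ∀ b : Bool, cA a (lep ψ (w, b)) < r ∨ p < cA a (lep ψ (w, b)) := by
          intro b
          rcases lt_or_ge (cA a (lep ψ (w, b))) p with h | h
          · exact Or.inl ((hr _ (coordE_mem ψ a (w, b))).1 h)
          · refine Or.inr (lt_of_le_of_ne h ?_)
            exact (coord_ne hm a (show ((u, false) : V × Bool) ≠ (w, b) from
              fun hh => hwu (congrArg Prod.fst hh).symm))
        exact (mem_arc a).2 (btw3_shift (hepts false) (hepts true) hrz hzp ((mem_arc a).1 hzw))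
      have hadjuw : G.Adj u w := (adj_iff hm (fun hh => hwu hh.symm)).2
        ⟨(ψ u).1, mem_arc_left _, hPw⟩
      rcases mem_cnbr.1 (hsub (mem_cnbr.2 (Or.inr hadjuw))) with h | h
      · exact absurd h hw
      · exact h
    · exact (adj_iff hm (Ne.symm hw)).2 ⟨z, (memv z).2 (Or.inr hza), hzw⟩
  have hfresh : ∀ pr' : V × Bool, pr'.1 ≠ v → lep ψ pr' ≠ c'.1 ∧ lep ψ pr' ≠ c'.2 := by
    intro pr' hpr'
    constructor
    · exact hfreshn pr'
    · intro he
      have he' : lep ψ pr' = lep ψ (v, true) := by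
        rw [lep_snd']; rw [hc'd] at he; exact he
      exact hpr' (congrArg Prod.fst (lep_inj hm he'))
  have hnec' : c'.1 ≠ c'.2 := by
    intro he
    have := congrArg (cA a) he
    rw [hc'1, hc'2] at this
    linarith
  refine ⟨Function.update ψ v c', core_extend hm v c' hfresh hnec' hgrow hadjc, ?_, ?_, ?_⟩
  · intro w hw; exact Function.update_of_ne hw _ _
  · intro w
    by_cases hw : w = v
    · subst hw; rw [Function.update_self]; exact hgrow
    · rw [Function.update_of_ne hw]
  · intro z hz
    rw [Function.update_self]
    exact (memc' z).2 (Or.inl (by linarith [((memu z).1 hz).1]))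

end Surgery

section Surgery2

attribute [local instance] Classical.propDecidable

variable {V : Type*} [Fintype V] {G : SimpleGraph V} {ψ : V → Circle1 × Circle1}

lemma fixCsB (hm : IsCAModel G ψ) {v u : V} (hvu : v ≠ u)
    (hadjvu : G.Adj v u) (hsub : cnbr G u ⊆ cnbr G v)
    (hP : (ψ u).1 ∈ arcPts (ψ v)) (hQ : (ψ u).2 ∉ arcPts (ψ v)) :
    ∃ ψ' : V → Circle1 × Circle1, IsCAModel G ψ' ∧ (∀ w, w ≠ v → ψ' w = ψ w) ∧
      (∀ w, arcPts (ψ w) ⊆ arcPts (ψ' w)) ∧ arcPts (ψ u) ⊆ arcPts (ψ' v) := by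
  obtain ⟨a, ha⟩ := exists_base (ψ v).1
  set t := cA a (ψ v).2 with htd
  set p := cA a (ψ u).1 with hpd
  set q := cA a (ψ u).2 with hqd
  have htm := cA_mem a (ψ v).2
  have hpm := cA_mem a (ψ u).1
  have hqm := cA_mem a (ψ u).2
  have hta : t ≠ a := fun h =>
    (arc_fst_ne_snd hm v).symm (cA_inj (by rw [← htd, h, ha]) : (ψ v).2 = (ψ v).1)
  have memv : ∀ x : Circle1, x ∈ arcPts (ψ v) ↔ cA a x ≤ t :=
    fun x => mem_base1 ha hta
  have hpt : p ≤ t := (memv (ψ u).1).1 hP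
  have htq : t < q := not_le.1 (fun h => hQ ((memv (ψ u).2).2 h))
  have hpa : a < p := by
    refine lt_of_le_of_ne hpm.1 ?_
    intro h
    exact coord_ne hm a (show ((v, false) : V × Bool) ≠ (u, false) by simp [hvu])
      (by rw [show lep ψ ((v:V), false) = (ψ v).1 from rfl,
              show lep ψ ((u:V), false) = (ψ u).1 from rfl, ha, ← hpd, ← h])
  have hpq : p < q := lt_of_le_of_lt hpt htq
  have memu : ∀ x : Circle1, x ∈ arcPts (ψ u) ↔ p ≤ cA a x ∧ cA a x ≤ q :=
    fun x => mem_nowrap hpq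
  obtain ⟨r, hqr, hrb, hr⟩ := exists_slack' (eptCoords ψ a) (show q < a + 1 from hqm.2)
  have hrw : r ∈ Set.Ico a (a + 1) := ⟨by linarith, hrb⟩
  set n : Circle1 := ((r : ℝ) : Circle1) with hnd
  have hn : cA a n = r := cA_coe_eq hrw
  have hfreshn : ∀ pr' : V × Bool, lep ψ pr' ≠ n := by
    intro pr' he
    exact (hr _ (coordE_mem ψ a pr')).2 (by rw [he, hn])
  set c' : Circle1 × Circle1 := ((ψ v).1, n) with hc'd
  have hc'1 : cA a c'.1 = a := ha
  have hc'2 : cA a c'.2 = r := hn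
  have memc' : ∀ x : Circle1, x ∈ arcPts c' ↔ cA a x ≤ r := by
    intro x
    rw [mem_base1 hc'1 (by rw [hc'2]; intro h; linarith), hc'2]
  have hgrow : arcPts (ψ v) ⊆ arcPts c' := by
    intro z hz
    exact (memc' z).2 (by linarith [(memv z).1 hz])
  have hadjc : ∀ w, w ≠ v → (arcPts (ψ w) ∩ arcPts c').Nonempty → G.Adj v w := by
    intro w hw ⟨z, hzw, hzc⟩
    by_cases hwu : w = u
    · exact hwu ▸ hadjvu
    have hzr : cA a z ≤ r := (memc' z).1 hzc
    by_cases hzt : cA a z ≤ t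
    · exact (adj_iff hm (Ne.symm hw)).2 ⟨z, (memv z).2 hzt, hzw⟩
    push_neg at hzt
    by_cases hzq : cA a z ≤ q
    · have hzu : z ∈ arcPts (ψ u) := (memu z).2 ⟨by linarith, hzq⟩
      have hadjuw : G.Adj u w := (adj_iff hm (fun hh => hwu hh.symm)).2 ⟨z, hzu, hzw⟩
      rcases mem_cnbr.1 (hsub (mem_cnbr.2 (Or.inr hadjuw))) with h | h
      · exact absurd h hw
      · exact h
    push_neg at hzq
    have hQw : (ψ u).2 ∈ arcPts (ψ w) := by
      have hepts : ∀ b : Bool, cA a (lep ψ (w, b)) ≤ q ∨ r < cA a (lep ψ (w, b)) := by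
        intro b
        rcases le_or_gt (cA a (lep ψ (w, b))) q with h | h
        · exact Or.inl h
        · exact Or.inr ((hr _ (coordE_mem ψ a (w, b))).1 h)
      exact (mem_arc a).2 (btw3_shift' (hepts false) (hepts true) hzq hzr ((mem_arc a).1 hzw))
    have hadjuw : G.Adj u w := (adj_iff hm (fun hh => hwu hh.symm)).2
      ⟨(ψ u).2, mem_arc_right _, hQw⟩
    rcases mem_cnbr.1 (hsub (mem_cnbr.2 (Or.inr hadjuw))) with h | h
    · exact absurd h hw
    · exact h
  have hfresh : ∀ pr' : V × Bool, pr'.1 ≠ v → lep ψ pr' ≠ c'.1 ∧ lep ψ pr' ≠ c'.2 := by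
    intro pr' hpr'
    constructor
    · intro he
      have he' : lep ψ pr' = lep ψ (v, false) := by
        rw [lep_fst']; rw [hc'd] at he; exact he
      exact hpr' (congrArg Prod.fst (lep_inj hm he'))
    · exact hfreshn pr'
  have hnec' : c'.1 ≠ c'.2 := by
    intro he
    have := congrArg (cA a) he
    rw [hc'1, hc'2] at this
    linarith
  refine ⟨Function.update ψ v c', core_extend hm v c' hfresh hnec' hgrow hadjc, ?_, ?_, ?_⟩
  · intro w hw; exact Function.update_of_ne hw _ _
  · intro w
    by_cases hw : w = v
    · subst hw; rw [Function.update_self]; exact hgrow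
    · rw [Function.update_of_ne hw]
  · intro z hz
    rw [Function.update_self]
    exact (memc' z).2 (by linarith [((memu z).1 hz).2])

lemma fixCs (htw : NoTwins G) (hun : NoUniversal G) (hm : IsCAModel G ψ) {v u : V}
    (hcs : Cs G v u) (hnot : ¬ arcPts (ψ u) ⊆ arcPts (ψ v)) :
    ∃ ψ' : V → Circle1 × Circle1, IsCAModel G ψ' ∧ (∀ w, w ≠ v → ψ' w = ψ w) ∧
      (∀ w, arcPts (ψ w) ⊆ arcPts (ψ' w)) ∧ arcPts (ψ u) ⊆ arcPts (ψ' v) := by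
  have hvu : v ≠ u := hcs.1
  have hadjvu : G.Adj v u := cs_adj hcs
  have hsub : cnbr G u ⊆ cnbr G v := hcs.2.subset
  have hnot2 : ¬ arcPts (ψ v) ⊆ arcPts (ψ u) := by
    intro h
    have h2 := hcs.2
    rw [Set.ssubset_def] at h2
    exact h2.2 (subnbr hm hvu h)
  have hInter : (arcPts (ψ v) ∩ arcPts (ψ u)).Nonempty := (adj_iff hm hvu).1 hadjvu
  have hUnion : arcPts (ψ v) ∪ arcPts (ψ u) ≠ Set.univ :=
    fun h => Cs_not_Cc hun hcs (univ_cc htw hm hvu h)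
  have hd : ∀ (b b' : Bool) (hne : ((v, b) : V × Bool) ≠ (u, b')),
      lep ψ (v, b) ≠ lep ψ (u, b') := fun b b' hne => ept_ne hm hne
  rcases overlap_pos (arc_fst_ne_snd hm v) (arc_fst_ne_snd hm u)
      (hd false false (by simp [hvu])) (hd false true (by simp [hvu]))
      (hd true false (by simp [hvu])) (hd true true (by simp [hvu]))
      hInter hnot2 hnot hUnion with hA | hB
  · exact fixCsA hm hvu hadjvu hsub hA.1 hA.2.1
  · exact fixCsB hm hvu hadjvu hsub hB.1 hB.2.1

end Surgery2

section Surgery3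

attribute [local instance] Classical.propDecidable

variable {V : Type*} [Fintype V] {G : SimpleGraph V} {ψ : V → Circle1 × Circle1}

lemma fixCcA (hm : IsCAModel G ψ) {v u : V} (hcc : Cc G v u)
    (hS : (ψ v).1 ∈ arcPts (ψ u)) (hT : (ψ v).2 ∉ arcPts (ψ u)) :
    ∃ ψ' : V → Circle1 × Circle1, IsCAModel G ψ' ∧
      (∀ w, w ≠ v → w ≠ u → ψ' w = ψ w) ∧
      (∀ w, arcPts (ψ w) ⊆ arcPts (ψ' w)) ∧
      arcPts (ψ' v) ∪ arcPts (ψ' u) = Set.univ := by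
  have hvu : v ≠ u := hcc.1
  have hadjvu : G.Adj v u := hcc.2.1
  obtain ⟨a, ha⟩ := exists_base (ψ u).1
  set s := cA a (ψ v).1 with hsd
  set t := cA a (ψ v).2 with htd
  set q := cA a (ψ u).2 with hqd
  have hsm := cA_mem a (ψ v).1
  have htm := cA_mem a (ψ v).2
  have hqm := cA_mem a (ψ u).2
  have hqa : q ≠ a := fun h =>
    (arc_fst_ne_snd hm u).symm (cA_inj (by rw [← hqd, h, ha]) : (ψ u).2 = (ψ u).1)
  have memu : ∀ x : Circle1, x ∈ arcPts (ψ u) ↔ cA a x ≤ q :=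
    fun x => mem_base1 ha hqa
  have hsq : s < q := by
    refine lt_of_le_of_ne ((memu (ψ v).1).1 hS) ?_
    exact coord_ne hm a (show ((v, false) : V × Bool) ≠ (u, true) by simp [hvu])
  have hqt : q < t := not_le.1 (fun h => hT ((memu (ψ v).2).2 h))
  have hsa : s ≠ a := by
    intro h
    exact coord_ne hm a (show ((v, false) : V × Bool) ≠ (u, false) by simp [hvu])
      (by rw [show lep ψ ((v:V), false) = (ψ v).1 from rfl,
              show lep ψ ((u:V), false) = (ψ u).1 from rfl, ha, ← hsd, h])
  have has : a < s := lt_of_le_of_ne hsm.1 (Ne.symm hsa)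
  have hst : s < t := lt_trans hsq hqt
  have memv : ∀ x : Circle1, x ∈ arcPts (ψ v) ↔ s ≤ cA a x ∧ cA a x ≤ t :=
    fun x => mem_nowrap hst
  -- the two blocking finsets
  set E1 : Finset ℝ :=
    (Finset.univ.filter (fun pr : V × Bool =>
      t < cA a (lep ψ pr) ∧ ¬(pr.1 = u ∨ G.Adj u pr.1))).image
        (fun pr : V × Bool => cA a (lep ψ pr)) with hE1d
  set E2 : Finset ℝ :=
    (Finset.univ.filter (fun pr : V × Bool =>
      t < cA a (lep ψ pr) ∧ ¬(pr.1 = v ∨ G.Adj v pr.1))).image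
        (fun pr : V × Bool => cA a (lep ψ pr)) with hE2d
  have hne1 : (insert t E1).Nonempty := ⟨t, Finset.mem_insert_self _ _⟩
  have hne2 : (insert (a+1) E2).Nonempty := ⟨a+1, Finset.mem_insert_self _ _⟩
  set m1 := (insert t E1).max' hne1 with hm1d
  set m2 := (insert (a+1) E2).min' hne2 with hm2d
  have hm1t : t ≤ m1 := Finset.le_max' _ t (Finset.mem_insert_self _ _)
  have hm2b : m2 ≤ a + 1 := Finset.min'_le _ _ (Finset.mem_insert_self _ _)
  -- the separation claim
  have key : ∀ pr1 : V × Bool, t < cA a (lep ψ pr1) → ¬(pr1.1 = u ∨ G.Adj u pr1.1) →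
      ∀ pr2 : V × Bool, t < cA a (lep ψ pr2) → ¬(pr2.1 = v ∨ G.Adj v pr2.1) →
      cA a (lep ψ pr1) < cA a (lep ψ pr2) := by
    rintro ⟨w1, b1⟩ he1 hnu1 ⟨w2, b2⟩ he2 hnv2
    by_contra hcon
    push_neg at hcon
    have hw1u : w1 ≠ u := fun h => hnu1 (Or.inl h)
    have hw1nadj : ¬ G.Adj u w1 := fun h => hnu1 (Or.inr h)
    have hw2v : w2 ≠ v := fun h => hnv2 (Or.inl h)
    have hw2nadj : ¬ G.Adj v w2 := fun h => hnv2 (Or.inr h)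
    have hw1big : ∀ z ∈ arcPts (ψ w1), q < cA a z := by
      intro z hz
      by_contra hzq
      push_neg at hzq
      exact hw1nadj ((adj_iff hm (Ne.symm hw1u)).2 ⟨z, (memu z).2 hzq, hz⟩)
    have hw1v : w1 ≠ v := by
      intro h
      subst h
      cases b1
      · rw [lep_fst'] at he1; rw [← hsd] at he1; linarith
      · rw [lep_snd'] at he1; rw [← htd] at he1; linarith
    have hadjv1 : G.Adj v w1 := by
      have hmemw : w1 ∈ cnbr G v ∪ cnbr G u := hcc.2.2.1 ▸ Set.mem_univ w1
      rcases hmemw with h | h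
      · rcases mem_cnbr.1 h with h' | h'
        · exact absurd h' hw1v
        · exact h'
      · rcases mem_cnbr.1 h with h' | h'
        · exact absurd h' hw1u
        · exact absurd h' hw1nadj
    have hx1q : q < cA a (ψ w1).1 := hw1big _ (mem_arc_left _)
    have hy1q : q < cA a (ψ w1).2 := hw1big _ (mem_arc_right _)
    have hx1y1 : cA a (ψ w1).1 < cA a (ψ w1).2 := by
      rcases lt_trichotomy (cA a (ψ w1).1) (cA a (ψ w1).2) with h | h | h
      · exact h
      · exact absurd (cA_inj h) (arc_fst_ne_snd hm w1)
      · exfalso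
        have hPmem : (ψ u).1 ∈ arcPts (ψ w1) :=
          (mem_wrap h).2 (Or.inr (by rw [ha]; exact (cA_mem a _).1))
        have := hw1big _ hPmem
        rw [ha] at this
        linarith
    obtain ⟨z0, hz0v, hz0w⟩ := (adj_iff hm (Ne.symm hw1v)).1 hadjv1
    have hz0a := (mem_nowrap hx1y1).1 hz0w
    have hz0b := (memv z0).1 hz0v
    have hx1t : cA a (ψ w1).1 ≤ t := by linarith [hz0a.1, hz0b.2]
    have he1y : lep ψ (w1, b1) = (ψ w1).2 := by
      cases b1
      · exact absurd he1 (not_lt.2 (by rw [lep_fst']; exact hx1t))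
      · rfl
    rw [he1y] at he1 hcon
    -- w2 analysis
    have hw2big : ∀ z ∈ arcPts (ψ w2), cA a z < s ∨ t < cA a z := by
      intro z hz
      by_contra hcon2
      push_neg at hcon2
      exact hw2nadj ((adj_iff hm (Ne.symm hw2v)).2 ⟨z, (memv z).2 ⟨hcon2.1, hcon2.2⟩, hz⟩)
    have hw2u : w2 ≠ u := by
      intro h
      subst h
      cases b2
      · rw [lep_fst'] at he2; rw [ha] at he2; linarith [htm.2, hst]
      · rw [lep_snd'] at he2; rw [← hqd] at he2; linarith
    have hadju2 : G.Adj u w2 := by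
      have hmemw : w2 ∈ cnbr G v ∪ cnbr G u := hcc.2.2.1 ▸ Set.mem_univ w2
      rcases hmemw with h | h
      · rcases mem_cnbr.1 h with h' | h'
        · exact absurd h' hw2v
        · exact absurd h' hw2nadj
      · rcases mem_cnbr.1 h with h' | h'
        · exact absurd h' hw2u
        · exact h'
    obtain ⟨z1, hz1u, hz1w⟩ := (adj_iff hm (Ne.symm hw2u)).1 hadju2
    have hz1q : cA a z1 ≤ q := (memu z1).1 hz1u
    have hwrap2 : cA a (ψ w2).2 < cA a (ψ w2).1 := by
      rcases lt_trichotomy (cA a (ψ w2).1) (cA a (ψ w2).2) with h | h | h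
      · exfalso
        have hx2z : cA a (ψ w2).1 ≤ cA a z1 := ((mem_nowrap h).1 hz1w).1
        have he2y : lep ψ (w2, b2) = (ψ w2).2 := by
          cases b2
          · exact absurd he2 (not_lt.2 (by rw [lep_fst']; linarith))
          · rfl
        rw [he2y] at he2
        have hTmem : (ψ v).2 ∈ arcPts (ψ w2) :=
          (mem_nowrap h).2 ⟨by rw [← htd]; linarith, by rw [← htd]; linarith⟩
        rcases hw2big _ hTmem with h' | h' <;> (rw [← htd] at h'; linarith)
      · exact absurd (cA_inj h) (arc_fst_ne_snd hm w2)
      · exact h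
    have hy2s : cA a (ψ w2).2 < s := by
      rcases hw2big _ (mem_arc_right (ψ w2)) with h | h
      · exact h
      · exfalso
        have hTmem : (ψ v).2 ∈ arcPts (ψ w2) :=
          (mem_wrap hwrap2).2 (Or.inr (by rw [← htd]; linarith))
        rcases hw2big _ hTmem with h' | h' <;> (rw [← htd] at h'; linarith)
    have hx2t : t < cA a (ψ w2).1 := by
      rcases hw2big _ (mem_arc_left (ψ w2)) with h | h
      · exfalso
        have hSmem : (ψ v).1 ∈ arcPts (ψ w2) :=
          (mem_wrap hwrap2).2 (Or.inl (by rw [← hsd]; linarith))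
        rcases hw2big _ hSmem with h' | h' <;> (rw [← hsd] at h'; linarith)
      · exact h
    have he2x : lep ψ (w2, b2) = (ψ w2).1 := by
      cases b2
      · rfl
      · exfalso
        rw [lep_snd'] at he2
        linarith
    rw [he2x] at he2 hcon
    have hLw2 : (ψ w1).2 ∈ arcPts (ψ w2) := (mem_wrap hwrap2).2 (Or.inl hcon)
    have hw1w2 : w1 ≠ w2 := fun h => hw2nadj (h ▸ hadjv1)
    have hadj12 : G.Adj w1 w2 := (adj_iff hm hw1w2).2 ⟨(ψ w1).2, mem_arc_right _, hLw2⟩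
    have hw1mem : w1 ∈ cnbr G v \ cnbr G u :=
      ⟨mem_cnbr.2 (Or.inr hadjv1), fun h => hnu1 (mem_cnbr.1 h)⟩
    have hsubw1 := hcc.2.2.2.1 w1 hw1mem
    exact hnv2 (mem_cnbr.1 (hsubw1.subset (mem_cnbr.2 (Or.inr hadj12))))
  have hm1m2 : m1 < m2 := by
    rw [hm1d, Finset.max'_lt_iff]
    intro e1 he1
    rw [hm2d, Finset.lt_min'_iff]
    intro e2 he2
    rcases Finset.mem_insert.1 he1 with rfl | he1
    · rcases Finset.mem_insert.1 he2 with rfl | he2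
      · linarith [htm.2]
      · obtain ⟨pr2, hpr2, rfl⟩ := Finset.mem_image.1 he2
        exact (Finset.mem_filter.1 hpr2).2.1
    · obtain ⟨pr1, hpr1, rfl⟩ := Finset.mem_image.1 he1
      rcases Finset.mem_insert.1 he2 with rfl | he2
      · exact (cA_mem a _).2
      · obtain ⟨pr2, hpr2, rfl⟩ := Finset.mem_image.1 he2
        exact key pr1 (Finset.mem_filter.1 hpr1).2.1 (Finset.mem_filter.1 hpr1).2.2
          pr2 (Finset.mem_filter.1 hpr2).2.1 (Finset.mem_filter.1 hpr2).2.2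
  -- choose the two fresh coordinates m1 < c1 < c2 < m2
  obtain ⟨c2, hc2a, hc2b, hc2f⟩ := exists_slack' (eptCoords ψ a) hm1m2
  obtain ⟨c1, hc1a, hc1b, hc1f⟩ := exists_slack' (eptCoords ψ a) hc2a
  have hta : a < t := lt_trans has hst
  have hc1w : c1 ∈ Set.Ico a (a+1) := ⟨by linarith, by linarith⟩
  have hc2w : c2 ∈ Set.Ico a (a+1) := ⟨by linarith, by linarith⟩
  set C1 : Circle1 := ((c1 : ℝ) : Circle1) with hC1d
  set C2 : Circle1 := ((c2 : ℝ) : Circle1) with hC2d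
  have hC1 : cA a C1 = c1 := cA_coe_eq hc1w
  have hC2 : cA a C2 = c2 := cA_coe_eq hc2w
  have hfr1 : ∀ pr : V × Bool, lep ψ pr ≠ C1 := fun pr he =>
    (hc1f _ (coordE_mem ψ a pr)).2 (by rw [he, hC1])
  have hfr2 : ∀ pr : V × Bool, lep ψ pr ≠ C2 := fun pr he =>
    (hc2f _ (coordE_mem ψ a pr)).2 (by rw [he, hC2])
  -- lower bound on endpoints in the gap that are not adjacent to u resp v
  have hgapu : ∀ pr : V × Bool, t < cA a (lep ψ pr) → cA a (lep ψ pr) ≤ m1 ∨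
      (pr.1 = u ∨ G.Adj u pr.1) := by
    intro pr hpr
    by_cases h : pr.1 = u ∨ G.Adj u pr.1
    · exact Or.inr h
    · refine Or.inl (Finset.le_max' _ _ (Finset.mem_insert_of_mem ?_))
      rw [hE1d]
      exact Finset.mem_image_of_mem _ (Finset.mem_filter.2 ⟨Finset.mem_univ _, hpr, h⟩)
  have hgapv : ∀ pr : V × Bool, t < cA a (lep ψ pr) → m2 ≤ cA a (lep ψ pr) ∨
      (pr.1 = v ∨ G.Adj v pr.1) := by
    intro pr hpr
    by_cases h : pr.1 = v ∨ G.Adj v pr.1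
    · exact Or.inr h
    · refine Or.inl (Finset.min'_le _ _ (Finset.mem_insert_of_mem ?_))
      rw [hE2d]
      exact Finset.mem_image_of_mem _ (Finset.mem_filter.2 ⟨Finset.mem_univ _, hpr, h⟩)
  -- Step 1 : extend the arc of v to (S, C2)
  set cv : Circle1 × Circle1 := ((ψ v).1, C2) with hcvd
  have hcv1 : cA a cv.1 = s := rfl
  have hcv2 : cA a cv.2 = c2 := hC2
  have hsc2 : s < c2 := by linarith
  have memcv : ∀ x : Circle1, x ∈ arcPts cv ↔ s ≤ cA a x ∧ cA a x ≤ c2 := by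
    intro x
    rw [mem_nowrap (show cA a cv.1 < cA a cv.2 by rw [hcv1, hcv2]; exact hsc2), hcv1, hcv2]
  have hgrow1 : arcPts (ψ v) ⊆ arcPts cv := by
    intro z hz
    obtain ⟨h1, h2⟩ := (memv z).1 hz
    exact (memcv z).2 ⟨h1, by linarith⟩
  have hadj1 : ∀ w, w ≠ v → (arcPts (ψ w) ∩ arcPts cv).Nonempty → G.Adj v w := by
    intro w hw ⟨z, hzw, hzc⟩
    obtain ⟨hz1, hz2⟩ := (memcv z).1 hzc
    by_cases hzt : cA a z ≤ t
    · exact (adj_iff hm (Ne.symm hw)).2 ⟨z, (memv z).2 ⟨hz1, hzt⟩, hzw⟩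
    push_neg at hzt
    by_cases hwu : w = u
    · exact hwu ▸ hadjvu
    have hTv : (ψ v).2 ∈ arcPts (ψ v) := mem_arc_right _
    have adjOfT : (ψ v).2 ∈ arcPts (ψ w) → G.Adj v w := fun hTw =>
      (adj_iff hm (Ne.symm hw)).2 ⟨(ψ v).2, hTv, hTw⟩
    have adjOfPv : ((w : V) = v ∨ G.Adj v w) → G.Adj v w := fun h =>
      h.resolve_left hw
    rcases lt_trichotomy (cA a (ψ w).1) (cA a (ψ w).2) with hcase | hcase | hcase
    · obtain ⟨ha1, ha2⟩ := (mem_nowrap hcase).1 hzw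
      by_cases hxt : cA a (ψ w).1 ≤ t
      · exact adjOfT ((mem_nowrap hcase).2 ⟨by rw [← htd]; exact hxt, by rw [← htd]; linarith⟩)
      · push_neg at hxt
        rcases hgapv (w, false) (by rw [lep_fst']; exact hxt) with h | h
        · exfalso
          rw [lep_fst'] at h
          linarith
        · exact adjOfPv h
    · exact absurd (cA_inj hcase) (arc_fst_ne_snd hm w)
    · rcases (mem_wrap hcase).1 hzw with h | h
      · by_cases hxt : cA a (ψ w).1 ≤ t
        · exact adjOfT ((mem_wrap hcase).2 (Or.inl (by rw [← htd]; exact hxt)))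
        · push_neg at hxt
          rcases hgapv (w, false) (by rw [lep_fst']; exact hxt) with h' | h'
          · exfalso
            rw [lep_fst'] at h'
            linarith
          · exact adjOfPv h'
      · exact adjOfT ((mem_wrap hcase).2 (Or.inr (by rw [← htd]; linarith)))
  have hfresh1 : ∀ pr : V × Bool, pr.1 ≠ v → lep ψ pr ≠ cv.1 ∧ lep ψ pr ≠ cv.2 := by
    intro pr hpr
    constructor
    · intro he
      have he' : lep ψ pr = lep ψ (v, false) := by
        rw [lep_fst']; rw [hcvd] at he; exact he
      exact hpr (congrArg Prod.fst (lep_inj hm he'))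
    · intro he
      exact hfr2 pr (by rw [hcvd] at he; exact he)
  have hnecv : cv.1 ≠ cv.2 := by
    intro he
    have := congrArg (cA a) he
    rw [hcv1, hcv2] at this
    linarith
  set ψ₁ := Function.update ψ v cv with hψ₁d
  have hm₁ : IsCAModel G ψ₁ := core_extend hm v cv hfresh1 hnecv hgrow1 hadj1
  have hψ₁v : ψ₁ v = cv := Function.update_self _ _ _
  have hψ₁w : ∀ w, w ≠ v → ψ₁ w = ψ w := fun w hw => Function.update_of_ne hw _ _
  have hψ₁u : ψ₁ u = ψ u := hψ₁w u (Ne.symm hvu)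
  -- Step 2 : extend the arc of u to (C1, Q)
  set cu : Circle1 × Circle1 := (C1, (ψ u).2) with hcud
  have hcu1 : cA a cu.1 = c1 := hC1
  have hcu2 : cA a cu.2 = q := rfl
  have hqc1 : q < c1 := by linarith
  have memcu : ∀ x : Circle1, x ∈ arcPts cu ↔ c1 ≤ cA a x ∨ cA a x ≤ q := by
    intro x
    rw [mem_wrap (show cA a cu.2 < cA a cu.1 by rw [hcu1, hcu2]; exact hqc1), hcu1, hcu2]
  have hgrow2 : arcPts (ψ₁ u) ⊆ arcPts cu := by
    rw [hψ₁u]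
    intro z hz
    exact (memcu z).2 (Or.inr ((memu z).1 hz))
  have hadj2 : ∀ w, w ≠ u → (arcPts (ψ₁ w) ∩ arcPts cu).Nonempty → G.Adj u w := by
    intro w hw ⟨z, hzw, hzc⟩
    rcases (memcu z).1 hzc with hz1 | hz1
    swap
    · -- z lies in the old arc of u
      refine (adj_iff hm₁ (Ne.symm hw)).2 ⟨z, ?_, hzw⟩
      rw [hψ₁u]
      exact (memu z).2 hz1
    by_cases hwv : w = v
    · exact hwv ▸ hadjvu.symm
    rw [hψ₁w w hwv] at hzw
    have adjOfP : (ψ u).1 ∈ arcPts (ψ w) → G.Adj u w := fun hPw =>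
      (adj_iff hm (Ne.symm hw)).2 ⟨(ψ u).1, mem_arc_left _, hPw⟩
    rcases lt_trichotomy (cA a (ψ w).1) (cA a (ψ w).2) with hcase | hcase | hcase
    · obtain ⟨ha1, ha2⟩ := (mem_nowrap hcase).1 hzw
      have hyt : t < cA a (ψ w).2 := by linarith
      rcases hgapu (w, true) (by rw [lep_snd']; exact hyt) with h | h
      · exfalso
        rw [lep_snd'] at h
        linarith
      · exact h.resolve_left hw
    · exact absurd (cA_inj hcase) (arc_fst_ne_snd hm w)
    · exact adjOfP ((mem_wrap hcase).2 (Or.inr (by rw [ha]; exact (cA_mem a _).1)))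
  have hfresh2 : ∀ pr : V × Bool, pr.1 ≠ u → lep ψ₁ pr ≠ cu.1 ∧ lep ψ₁ pr ≠ cu.2 := by
    rintro ⟨w', b'⟩ hpr
    by_cases hwv : w' = v
    · subst hwv
      cases b'
      · constructor
        · intro he
          rw [show lep ψ₁ ((w' : V), false) = (ψ₁ w').1 from rfl, hψ₁v, hcud] at he
          have := congrArg (cA a) he
          rw [hcv1, hC1] at this
          linarith
        · intro he
          rw [show lep ψ₁ ((w' : V), false) = (ψ₁ w').1 from rfl, hψ₁v, hcud] at he
          have := congrArg (cA a) he
          rw [hcv1] at this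
          rw [show cA a ((ψ u).2) = q from rfl] at this
          linarith
      · constructor
        · intro he
          rw [show lep ψ₁ ((w' : V), true) = (ψ₁ w').2 from rfl, hψ₁v, hcud] at he
          have := congrArg (cA a) he
          rw [hcv2, hC1] at this
          linarith
        · intro he
          rw [show lep ψ₁ ((w' : V), true) = (ψ₁ w').2 from rfl, hψ₁v, hcud] at he
          have := congrArg (cA a) he
          rw [hcv2] at this
          rw [show cA a ((ψ u).2) = q from rfl] at this
          linarith
    · have hlep : lep ψ₁ (w', b') = lep ψ (w', b') := by
        unfold lep
        rw [hψ₁w w' hwv]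
      rw [hlep]
      constructor
      · intro he
        exact hfr1 _ (by rw [hcud] at he; exact he)
      · intro he
        have he' : lep ψ (w', b') = lep ψ (u, true) := by
          rw [lep_snd']; rw [hcud] at he; exact he
        exact hpr (congrArg Prod.fst (lep_inj hm he'))
  have hnecu : cu.1 ≠ cu.2 := by
    intro he
    have := congrArg (cA a) he
    rw [hcu1, hcu2] at this
    linarith
  set ψ₂ := Function.update ψ₁ u cu with hψ₂d
  have hm₂ : IsCAModel G ψ₂ := core_extend hm₁ u cu hfresh2 hnecu hgrow2 hadj2
  have hψ₂u : ψ₂ u = cu := Function.update_self _ _ _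
  have hψ₂w : ∀ w, w ≠ u → ψ₂ w = ψ₁ w := fun w hw => Function.update_of_ne hw _ _
  have hψ₂v : ψ₂ v = cv := by rw [hψ₂w v hvu, hψ₁v]
  refine ⟨ψ₂, hm₂, ?_, ?_, ?_⟩
  · intro w hwv hwu
    rw [hψ₂w w hwu, hψ₁w w hwv]
  · intro w
    by_cases hwu : w = u
    · subst hwu
      rw [hψ₂u, ← hψ₁u]
      exact hgrow2
    by_cases hwv : w = v
    · subst hwv
      rw [hψ₂v]
      exact hgrow1
    · rw [hψ₂w w hwu, hψ₁w w hwv]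
  · apply Set.eq_univ_of_forall
    intro x
    rcases le_or_gt (cA a x) q with h | h
    · exact Set.mem_union_right _ (by rw [hψ₂u]; exact (memcu x).2 (Or.inr h))
    rcases le_or_gt (cA a x) c2 with h2 | h2
    · exact Set.mem_union_left _ (by rw [hψ₂v]; exact (memcv x).2 ⟨by linarith, h2⟩)
    · exact Set.mem_union_right _ (by rw [hψ₂u]; exact (memcu x).2 (Or.inl (by linarith)))

end Surgery3

section Assembly

attribute [local instance] Classical.propDecidable

variable {V : Type*} [Fintype V] {G : SimpleGraph V} {ψ : V → Circle1 × Circle1}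

lemma fixCc (htw : NoTwins G) (hun : NoUniversal G) (hm : IsCAModel G ψ) {v u : V}
    (hcc : Cc G v u) (hnu : arcPts (ψ v) ∪ arcPts (ψ u) ≠ Set.univ) :
    ∃ ψ' : V → Circle1 × Circle1, IsCAModel G ψ' ∧
      (∀ w, w ≠ v → w ≠ u → ψ' w = ψ w) ∧
      (∀ w, arcPts (ψ w) ⊆ arcPts (ψ' w)) ∧
      arcPts (ψ' v) ∪ arcPts (ψ' u) = Set.univ := by
  have hvu : v ≠ u := hcc.1
  have hadjvu : G.Adj v u := hcc.2.1
  have hInter : (arcPts (ψ v) ∩ arcPts (ψ u)).Nonempty := (adj_iff hm hvu).1 hadjvu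
  have hcnbr := hcc.2.2.1
  have hnsub1 : ¬ arcPts (ψ u) ⊆ arcPts (ψ v) := by
    intro h
    apply hun v
    have hs := subnbr hm hvu.symm h
    rw [Set.union_eq_self_of_subset_right hs] at hcnbr
    exact hcnbr
  have hnsub2 : ¬ arcPts (ψ v) ⊆ arcPts (ψ u) := by
    intro h
    apply hun u
    have hs := subnbr hm hvu h
    rw [Set.union_eq_self_of_subset_left hs] at hcnbr
    exact hcnbr
  have hd : ∀ (b b' : Bool) (hne : ((v, b) : V × Bool) ≠ (u, b')),
      lep ψ (v, b) ≠ lep ψ (u, b') := fun b b' hne => ept_ne hm hne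
  rcases overlap_pos (arc_fst_ne_snd hm v) (arc_fst_ne_snd hm u)
      (hd false false (by simp [hvu])) (hd false true (by simp [hvu]))
      (hd true false (by simp [hvu])) (hd true true (by simp [hvu]))
      hInter hnsub2 hnsub1 hnu with hA | hB
  · exact fixCcA hm hcc hA.2.2.1 hA.2.2.2
  · obtain ⟨ψ', h1, h2, h3, h4⟩ := fixCcA hm hcc.symm' hB.1 hB.2.1
    exact ⟨ψ', h1, fun w hwv hwu => h2 w hwu hwv, h3, by rw [Set.union_comm]; exact h4⟩

lemma phase1 (htw : NoTwins G) (hun : NoUniversal G) :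
    ∀ (k : ℕ) (ψ : V → Circle1 × Circle1), IsCAModel G ψ →
      {p : V × V | Cc G p.1 p.2 ∧ arcPts (ψ p.1) ∪ arcPts (ψ p.2) ≠ Set.univ}.ncard ≤ k →
      ∃ ψ' : V → Circle1 × Circle1, IsCAModel G ψ' ∧
        ∀ v u : V, Cc G v u → arcPts (ψ' v) ∪ arcPts (ψ' u) = Set.univ := by
  intro k
  induction k with
  | zero =>
    intro ψ hm h0
    refine ⟨ψ, hm, ?_⟩
    intro v u hcc
    by_contra hne
    have hmem : (v, u) ∈
        {p : V × V | Cc G p.1 p.2 ∧ arcPts (ψ p.1) ∪ arcPts (ψ p.2) ≠ Set.univ} := ⟨hcc, hne⟩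
    rw [(Set.ncard_eq_zero (Set.toFinite _)).1 (Nat.le_zero.1 h0)] at hmem
    exact hmem
  | succ k ih =>
    intro ψ hm hcard
    by_cases hemp : {p : V × V | Cc G p.1 p.2 ∧ arcPts (ψ p.1) ∪ arcPts (ψ p.2) ≠ Set.univ} = ∅
    · refine ⟨ψ, hm, ?_⟩
      intro v u hcc
      by_contra hne
      have hmem : (v, u) ∈
          {p : V × V | Cc G p.1 p.2 ∧ arcPts (ψ p.1) ∪ arcPts (ψ p.2) ≠ Set.univ} := ⟨hcc, hne⟩
      rw [hemp] at hmem
      exact hmem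
    · obtain ⟨⟨v, u⟩, hcc, hne⟩ := Set.nonempty_iff_ne_empty.2 hemp
      obtain ⟨ψ', hm', heq, hgrow, huniv⟩ := fixCc htw hun hm hcc hne
      apply ih ψ' hm'
      have hsub : {p : V × V | Cc G p.1 p.2 ∧ arcPts (ψ' p.1) ∪ arcPts (ψ' p.2) ≠ Set.univ} ⊆
          {p : V × V | Cc G p.1 p.2 ∧ arcPts (ψ p.1) ∪ arcPts (ψ p.2) ≠ Set.univ} \ {(v, u)} := by
        rintro ⟨x, y⟩ ⟨hxy1, hxy2⟩
        refine ⟨⟨hxy1, ?_⟩, ?_⟩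
        · intro hun2
          exact hxy2 (Set.univ_subset_iff.1
            (hun2 ▸ Set.union_subset_union (hgrow x) (hgrow y)))
        · intro hmem
          rw [Set.mem_singleton_iff] at hmem
          injection hmem with h1 h2
          subst h1; subst h2
          exact hxy2 huniv
      have hlt : ({p : V × V | Cc G p.1 p.2 ∧ arcPts (ψ p.1) ∪ arcPts (ψ p.2) ≠ Set.univ}
          \ {(v, u)}).ncard <
          {p : V × V | Cc G p.1 p.2 ∧ arcPts (ψ p.1) ∪ arcPts (ψ p.2) ≠ Set.univ}.ncard :=
        Set.ncard_lt_ncard (Set.sdiff_singleton_ssubset.2 ⟨hcc, hne⟩) (Set.toFinite _)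
      have := Set.ncard_le_ncard hsub (Set.toFinite _)
      omega

lemma phase2 (htw : NoTwins G) (hun : NoUniversal G)
    (hex : ∃ ψ : V → Circle1 × Circle1, IsCAModel G ψ) :
    ∀ k : ℕ, ∃ ψ : V → Circle1 × Circle1, IsCAModel G ψ ∧
      (∀ v u : V, Cc G v u → arcPts (ψ v) ∪ arcPts (ψ u) = Set.univ) ∧
      (∀ v u : V, Cs G v u → (cnbr G v).ncard ≤ k → arcPts (ψ u) ⊆ arcPts (ψ v)) := by
  intro k
  induction k with
  | zero =>
    obtain ⟨ψ0, hm0⟩ := hex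
    obtain ⟨ψ1, hm1, hcc1⟩ := phase1 htw hun _ ψ0 hm0 (le_refl _)
    refine ⟨ψ1, hm1, hcc1, ?_⟩
    intro v u hcs hle
    exfalso
    have hvmem : v ∈ cnbr G v := self_mem_cnbr G v
    rw [(Set.ncard_eq_zero (Set.toFinite _)).1 (Nat.le_zero.1 hle)] at hvmem
    exact hvmem
  | succ k ih =>
    obtain ⟨ψ0, hm0, hcc0, hcs0⟩ := ih
    -- inner induction on the number of violated level-(k+1) pairs
    have inner : ∀ (m : ℕ) (ψ : V → Circle1 × Circle1), IsCAModel G ψ →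
        (∀ v u : V, Cc G v u → arcPts (ψ v) ∪ arcPts (ψ u) = Set.univ) →
        (∀ v u : V, Cs G v u → (cnbr G v).ncard ≤ k → arcPts (ψ u) ⊆ arcPts (ψ v)) →
        {p : V × V | Cs G p.1 p.2 ∧ (cnbr G p.1).ncard = k + 1 ∧
          ¬ arcPts (ψ p.2) ⊆ arcPts (ψ p.1)}.ncard ≤ m →
        ∃ ψ' : V → Circle1 × Circle1, IsCAModel G ψ' ∧
          (∀ v u : V, Cc G v u → arcPts (ψ' v) ∪ arcPts (ψ' u) = Set.univ) ∧
          (∀ v u : V, Cs G v u → (cnbr G v).ncard ≤ k + 1 → arcPts (ψ' u) ⊆ arcPts (ψ' v)) := by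
      intro m
      induction m with
      | zero =>
        intro ψ hm hcc hcs h0
        refine ⟨ψ, hm, hcc, ?_⟩
        intro v u hcsvu hle
        rcases Nat.lt_succ_iff_lt_or_eq.1 (Nat.lt_succ_of_le hle) with h | h
        · exact hcs v u hcsvu (Nat.lt_succ_iff.1 h)
        · by_contra hnot
          have hmem : (v, u) ∈ {p : V × V | Cs G p.1 p.2 ∧ (cnbr G p.1).ncard = k + 1 ∧
              ¬ arcPts (ψ p.2) ⊆ arcPts (ψ p.1)} := ⟨hcsvu, h, hnot⟩
          rw [(Set.ncard_eq_zero (Set.toFinite _)).1 (Nat.le_zero.1 h0)] at hmem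
          exact hmem
      | succ m ih2 =>
        intro ψ hm hcc hcs hcard
        by_cases hemp : {p : V × V | Cs G p.1 p.2 ∧ (cnbr G p.1).ncard = k + 1 ∧
            ¬ arcPts (ψ p.2) ⊆ arcPts (ψ p.1)} = ∅
        · refine ⟨ψ, hm, hcc, ?_⟩
          intro v u hcsvu hle
          rcases Nat.lt_succ_iff_lt_or_eq.1 (Nat.lt_succ_of_le hle) with h | h
          · exact hcs v u hcsvu (Nat.lt_succ_iff.1 h)
          · by_contra hnot
            have hmem : (v, u) ∈ {p : V × V | Cs G p.1 p.2 ∧ (cnbr G p.1).ncard = k + 1 ∧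
                ¬ arcPts (ψ p.2) ⊆ arcPts (ψ p.1)} := ⟨hcsvu, h, hnot⟩
            rw [hemp] at hmem
            exact hmem
        · obtain ⟨⟨v, u⟩, hcsvu, hlev, hnot⟩ := Set.nonempty_iff_ne_empty.2 hemp
          dsimp only at hcsvu hlev hnot
          obtain ⟨ψ', hm', heq, hgrow, hcontain⟩ := fixCs htw hun hm hcsvu hnot
          have hyne : ∀ x y : V, Cs G x y → (cnbr G x).ncard ≤ k + 1 → y ≠ v := by
            intro x y hcsxy hlex hyv
            subst hyv
            have h1 := Set.ncard_lt_ncard hcsxy.2 (Set.toFinite _)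
            omega
          apply ih2 ψ' hm'
          · intro x y hccxy
            exact Set.univ_subset_iff.1
              ((hcc x y hccxy) ▸ Set.union_subset_union (hgrow x) (hgrow y))
          · intro x y hcsxy hlex
            have hyv : y ≠ v := hyne x y hcsxy (by omega)
            have hxv : x ≠ v := by
              intro hxv
              subst hxv
              omega
            rw [heq x hxv, heq y hyv]
            exact hcs x y hcsxy hlex
          · have hsub : {p : V × V | Cs G p.1 p.2 ∧ (cnbr G p.1).ncard = k + 1 ∧
                ¬ arcPts (ψ' p.2) ⊆ arcPts (ψ' p.1)} ⊆
                {p : V × V | Cs G p.1 p.2 ∧ (cnbr G p.1).ncard = k + 1 ∧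
                  ¬ arcPts (ψ p.2) ⊆ arcPts (ψ p.1)} \ {(v, u)} := by
              rintro ⟨x, y⟩ ⟨hxy1, hxy2, hxy3⟩
              have hyv : y ≠ v := hyne x y hxy1 (le_of_eq hxy2)
              refine ⟨⟨hxy1, hxy2, ?_⟩, ?_⟩
              · intro hold
                apply hxy3
                rw [heq y hyv]
                by_cases hxv : x = v
                · subst hxv
                  intro z hz
                  exact hgrow x (hold hz)
                · rw [heq x hxv]
                  exact hold
              · intro hmem
                rw [Set.mem_singleton_iff] at hmem
                injection hmem with h1 h2
                apply hxy3
                subst h1; subst h2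
                rw [heq y (hcsvu.1.symm)]
                exact hcontain
            have hlt : ({p : V × V | Cs G p.1 p.2 ∧ (cnbr G p.1).ncard = k + 1 ∧
                ¬ arcPts (ψ p.2) ⊆ arcPts (ψ p.1)} \ {(v, u)}).ncard <
                {p : V × V | Cs G p.1 p.2 ∧ (cnbr G p.1).ncard = k + 1 ∧
                  ¬ arcPts (ψ p.2) ⊆ arcPts (ψ p.1)}.ncard :=
              Set.ncard_lt_ncard (Set.sdiff_singleton_ssubset.2 ⟨hcsvu, hlev, hnot⟩)
                (Set.toFinite _)
            have := Set.ncard_le_ncard hsub (Set.toFinite _)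
            omega
    exact inner _ ψ0 hm0 hcc0 hcs0 (le_refl _)

end Assembly

/-- A finite graph `G` with no twins and no universal vertices is a
circular-arc graph if and only if it admits a normalized circular-arc model. -/
theorem stmt0 {V : Type*} [Fintype V] (G : SimpleGraph V)
    (htw : NoTwins G) (hun : NoUniversal G) :
    IsCircularArc G ↔ ∃ ψ : V → Circle1 × Circle1, IsNormalizedModel G ψ := by
  constructor
  · rintro ⟨ψ0, hm0⟩
    obtain ⟨ψ, hm, hcc, hcs⟩ := phase2 htw hun ⟨ψ0, hm0⟩ (Fintype.card V)
    refine ⟨ψ, norm_of_good htw hun hm ?_ hcc⟩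
    intro v u hcsvu
    exact hcs v u hcsvu (le_trans (Set.ncard_le_ncard (Set.subset_univ _) Set.finite_univ)
      (le_of_eq ((Set.ncard_univ V).trans (Nat.card_eq_fintype_card))))
  · rintro ⟨ψ, h⟩
    exact ⟨ψ, h.1⟩

end CAIso
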